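/- arXiv:1410.4462 — 5 statements merged into one kernel-verified Lean document; each statement's English description precedes it below -/
import Mathlib

section
/- Let M = (M_n)_{n≤0} be a sequence of Markov kernels on a finite set E with backward products M_{n,k} defined by M_{k,k} = Id and M_{n−1,k} = M_n M_{n,k} for n ≤ k. If for some n < k there exists x* ∈ E and ε > 0 with min_{x∈E} M_{n,k}(x, x*) ≥ ε, then under the independent-coupling measure Q (where the random variables ξ_n^x, for x ∈ E and n ≤ 0, are independent with ξ_n^x distributed as M_n(x,·), and Φ_{n,k} denotes the composition Φ_k ∘ ⋯ ∘ Φ_{n+1} of the random maps Φ_m(x) := ξ_m^x), the probability that the image of Φ_{n,k} is a singleton is at least ε^s, where s = card(E). -/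
open scoped BigOperators
open MeasureTheory ProbabilityTheory Filter

/-- Backward products `M_{n,k}`: `M_{k,k} = Id`, `M_{n-1,k} = M_n M_{n,k}`. -/
noncomputable def backProd {E : Type*} [Fintype E] [DecidableEq E] (M : ℤ → E → E → ℝ)
    (n k : ℤ) (x x' : E) : ℝ :=
  if _h : n < k then ∑ z, M (n + 1) x z * backProd M (n + 1) k z x'
  else if x = x' then 1 else 0
termination_by (k - n).toNat
decreasing_by omega

/-- Composed random maps `Φ_{n,k} = Φ_k ∘ ⋯ ∘ Φ_{n+1}`, where `Φ_m(x) = ξ_m^x = ω m x`. -/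
def PhiMap {E : Type*} (ω : ℤ → E → E) (n k : ℤ) (x : E) : E :=
  if _h : n < k then PhiMap ω (n + 1) k (ω (n + 1) x) else x
termination_by (k - n).toNat
decreasing_by omega

set_option linter.unusedSectionVars false

section Basic

variable {E : Type*} [Fintype E] [DecidableEq E]

theorem backProd_rec (M : ℤ → E → E → ℝ) {n k : ℤ} (h : n < k) (x x' : E) :
    backProd M n k x x' = ∑ z, M (n + 1) x z * backProd M (n + 1) k z x' := by
  rw [backProd]; simp [h]

theorem backProd_stop (M : ℤ → E → E → ℝ) {n k : ℤ} (h : ¬ n < k) (x x' : E) :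
    backProd M n k x x' = if x = x' then 1 else 0 := by
  rw [backProd]; simp [h]

theorem PhiMap_rec (ω : ℤ → E → E) {n k : ℤ} (h : n < k) (x : E) :
    PhiMap ω n k x = PhiMap ω (n + 1) k (ω (n + 1) x) := by
  rw [PhiMap]; simp [h]

theorem PhiMap_stop (ω : ℤ → E → E) {n k : ℤ} (h : ¬ n < k) (x : E) :
    PhiMap ω n k x = x := by
  rw [PhiMap]; simp [h]

theorem backProd_nonneg (M : ℤ → E → E → ℝ) (hM0 : ∀ n x x', 0 ≤ M n x x')
    (n k : ℤ) (x x' : E) : 0 ≤ backProd M n k x x' := by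
  by_cases h : n < k
  · rw [backProd_rec M h]
    exact Finset.sum_nonneg fun z _ =>
      mul_nonneg (hM0 _ _ _) (backProd_nonneg M hM0 (n + 1) k z x')
  · rw [backProd_stop M h]; split <;> norm_num
termination_by (k - n).toNat
decreasing_by omega

theorem backProd_sum (M : ℤ → E → E → ℝ) (hM1 : ∀ n x, ∑ x', M n x x' = 1)
    (n k : ℤ) (x : E) : ∑ x', backProd M n k x x' = 1 := by
  by_cases h : n < k
  · simp only [backProd_rec M h]
    rw [Finset.sum_comm]
    have h2 : ∀ z ∈ Finset.univ, ∑ x', M (n + 1) x z * backProd M (n + 1) k z x'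
        = M (n + 1) x z := fun z _ => by
      rw [← Finset.mul_sum, backProd_sum M hM1 (n + 1) k z, mul_one]
    rw [Finset.sum_congr rfl h2, hM1]
  · simp only [backProd_stop M h]
    simp
termination_by (k - n).toNat
decreasing_by omega

theorem backProd_le_one (M : ℤ → E → E → ℝ) (hM0 : ∀ n x x', 0 ≤ M n x x')
    (hM1 : ∀ n x, ∑ x', M n x x' = 1) (n k : ℤ) (x x' : E) : backProd M n k x x' ≤ 1 := by
  calc backProd M n k x x' ≤ ∑ y, backProd M n k x y :=
        Finset.single_le_sum (fun y _ => backProd_nonneg M hM0 n k x y) (Finset.mem_univ x')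
  _ = 1 := backProd_sum M hM1 n k x

theorem prod_comp_le_prod_image {f : E → ℝ} (h0 : ∀ y, 0 ≤ f y) (h1 : ∀ y, f y ≤ 1)
    (S : Finset E) (g : E → E) : ∏ x ∈ S, f (g x) ≤ ∏ y ∈ S.image g, f y := by
  induction S using Finset.induction_on with
  | empty => simp
  | @insert a s ha ih =>
    rw [Finset.prod_insert ha, Finset.image_insert]
    by_cases hmem : g a ∈ s.image g
    · rw [Finset.insert_eq_self.mpr hmem]
      calc f (g a) * ∏ x ∈ s, f (g x) ≤ 1 * ∏ x ∈ s, f (g x) :=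
            mul_le_mul_of_nonneg_right (h1 _) (Finset.prod_nonneg fun x _ => h0 _)
      _ = ∏ x ∈ s, f (g x) := one_mul _
      _ ≤ _ := ih
    · rw [Finset.prod_insert hmem]
      exact mul_le_mul_of_nonneg_left ih (h0 _)

end Basic

section Atoms
variable {E : Type*} [MeasurableSpace E]

def atomOf (y : E) : Set E := ⋂₀ {D : Set E | MeasurableSet D ∧ y ∈ D}

theorem measurableSet_atomOf [Fintype E] (y : E) : MeasurableSet (atomOf y) :=
  MeasurableSet.sInter ((Set.toFinite _).countable) fun _ hD => hD.1

theorem mem_atomOf_self (y : E) : y ∈ atomOf y :=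
  Set.mem_sInter.mpr fun _ hD => hD.2

theorem atomOf_subset {y : E} {D : Set E} (hD : MeasurableSet D) (hy : y ∈ D) :
    atomOf y ⊆ D := Set.sInter_subset_of_mem ⟨hD, hy⟩

theorem mem_iff_of_mem_atomOf {y y' : E} (h : y' ∈ atomOf y) {D : Set E}
    (hD : MeasurableSet D) : y ∈ D ↔ y' ∈ D := by
  constructor
  · intro hy; exact atomOf_subset hD hy h
  · intro hy'
    by_contra hy
    exact (atomOf_subset hD.compl hy h : y' ∈ Dᶜ) hy'

theorem atomOf_symm {y y' : E} (h : y' ∈ atomOf y) : y ∈ atomOf y' :=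
  Set.mem_sInter.mpr fun _ hD => (mem_iff_of_mem_atomOf h hD.1).mpr hD.2

theorem swap_preimage [DecidableEq E] {y y' : E} (h : y' ∈ atomOf y) {D : Set E}
    (hD : MeasurableSet D) : (Equiv.swap y y' : E → E) ⁻¹' D = D := by
  ext z
  simp only [Set.mem_preimage]
  rcases eq_or_ne z y with rfl | hzy
  · rw [Equiv.swap_apply_left]; exact (mem_iff_of_mem_atomOf h hD).symm
  rcases eq_or_ne z y' with rfl | hzy'
  · rw [Equiv.swap_apply_right]; exact mem_iff_of_mem_atomOf h hD
  · rw [Equiv.swap_apply_of_ne_of_ne hzy hzy']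

theorem invariant_of_fixing [DecidableEq E] (j : ℤ) (x : E) (σ : E → E)
    (hσ : ∀ D : Set E, MeasurableSet D → σ ⁻¹' D = D)
    (W : Set (ℤ → E → E)) (hW : MeasurableSet W) :
    (fun (ω : ℤ → E → E) (j' : ℤ) (x' : E) =>
      if j' = j ∧ x' = x then σ (ω j x) else ω j' x') ⁻¹' W = W := by
  set τ : (ℤ → E → E) → (ℤ → E → E) := fun ω j' x' =>
    if j' = j ∧ x' = x then σ (ω j x) else ω j' x' with hτdef
  let inv : MeasurableSpace (ℤ → E → E) :=
    { MeasurableSet' := fun W => τ ⁻¹' W = W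
      measurableSet_empty := by simp
      measurableSet_compl := fun s hs => by
        simp only [Set.preimage_compl, hs]
      measurableSet_iUnion := fun f hf => by
        simp only [Set.preimage_iUnion]
        exact Set.iUnion_congr hf }
  have h1 : (MeasurableSpace.pi : MeasurableSpace (ℤ → E → E)) =
      ⨆ j' : ℤ, ⨆ x' : E,
        MeasurableSpace.comap (fun ω : ℤ → E → E => ω j' x') inferInstance := by
    show (⨆ j' : ℤ, MeasurableSpace.comap (fun ω : ℤ → E → E => ω j')
        (⨆ x' : E, MeasurableSpace.comap (fun v : E → E => v x') inferInstance)) = _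
    simp only [MeasurableSpace.comap_iSup, MeasurableSpace.comap_comp]
    rfl
  have hle : (MeasurableSpace.pi : MeasurableSpace (ℤ → E → E)) ≤ inv := by
    rw [h1]
    refine iSup_le fun j' => iSup_le fun x' => ?_
    intro s hs
    obtain ⟨D, hD, rfl⟩ := hs
    show τ ⁻¹' ((fun ω : ℤ → E → E => ω j' x') ⁻¹' D) = (fun ω : ℤ → E → E => ω j' x') ⁻¹' D
    ext ω
    simp only [Set.mem_preimage, hτdef]
    by_cases hc : j' = j ∧ x' = x
    · rw [if_pos hc]
      obtain ⟨hj, hx⟩ := hc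
      subst hj; subst hx
      exact Set.ext_iff.mp (hσ D hD) (ω j' x')
    · rw [if_neg hc]
  exact hle W hW

end Atoms

section Bad

variable {E : Type*} [Fintype E] [DecidableEq E] [MeasurableSpace E]

/-- Outer-measure hull bound: any measurable superset of `{ω | ω j x = y}` contains
`{ω | ω j x = y'}` for `y'` in the atom of `y`, hence the outer measure of the atom
cylinder is a lower bound. -/
theorem hull_lemma (Q : Measure (ℤ → E → E)) (j : ℤ) (x : E) (y : E) :
    Q {ω : ℤ → E → E | ω j x ∈ atomOf y} ≤ Q {ω : ℤ → E → E | ω j x = y} := by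
  conv_rhs => rw [measure_eq_iInf]
  refine le_iInf fun t => le_iInf fun hst => le_iInf fun ht => measure_mono ?_
  intro ω hω
  have hy'atom : (ω j x) ∈ atomOf y := hω
  rcases eq_or_ne (ω j x) y with he | hne
  · exact hst he
  · set σ : E → E := (Equiv.swap y (ω j x) : E → E) with hσdef
    have hσ : ∀ D : Set E, MeasurableSet D → σ ⁻¹' D = D :=
      fun D hD => swap_preimage hy'atom hD
    have hτ := invariant_of_fixing j x σ hσ t ht
    set τ : (ℤ → E → E) → (ℤ → E → E) := fun ω' j' x' =>
      if j' = j ∧ x' = x then σ (ω' j x) else ω' j' x' with hτdef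
    have h1 : τ ω ∈ t := by
      refine hst ?_
      show τ ω j x = y
      simp only [hτdef, and_self, if_true, hσdef]
      exact Equiv.swap_apply_right y (ω j x)
    have : ω ∈ τ ⁻¹' t := h1
    rwa [hτ] at this

/-- Values whose singleton is not measurable have zero transition probability. -/
theorem bad_val_zero
    (M : ℤ → E → E → ℝ) (hM0 : ∀ n x x', 0 ≤ M n x x')
    (hM1 : ∀ n x, ∑ x', M n x x' = 1)
    (Q : Measure (ℤ → E → E)) [IsProbabilityMeasure Q]
    (hmarg : ∀ (n : ℤ) (x x' : E), Q {ω | ω n x = x'} = ENNReal.ofReal (M n x x'))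
    (j : ℤ) (x : E) (y : E) (hbad : ¬ MeasurableSet ({y} : Set E)) :
    M j x y = 0 := by
  classical
  -- auxiliary: for z in the atom of y₀ with z ≠ y₀, the transition prob to z is 0
  have sub : ∀ y₀ z : E, z ∈ atomOf y₀ → z ≠ y₀ → M j x z = 0 := by
    intro y₀ z hz hzne
    have hAt : MeasurableSet (atomOf y₀) := measurableSet_atomOf y₀
    have hmeas_ev : Measurable fun ω : ℤ → E → E => ω j x :=
      (measurable_pi_apply x).comp (measurable_pi_apply j)
    have hpre : MeasurableSet {ω : ℤ → E → E | ω j x ∈ atomOf y₀} := hmeas_ev hAt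
    -- cover of the complement
    have hcov : Q {ω : ℤ → E → E | ω j x ∉ atomOf y₀}
        ≤ ∑ z' ∈ Finset.univ.filter (fun z' => z' ∉ atomOf y₀), ENNReal.ofReal (M j x z') := by
      have hsub : {ω : ℤ → E → E | ω j x ∉ atomOf y₀}
          ⊆ ⋃ z' ∈ Finset.univ.filter (fun z' => z' ∉ atomOf y₀),
              {ω : ℤ → E → E | ω j x = z'} := by
        intro ω hω
        simp only [Set.mem_iUnion]
        exact ⟨ω j x, by simpa using hω, rfl⟩
      refine le_trans (measure_mono hsub) ?_
      refine le_trans (measure_biUnion_finset_le _ _) ?_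
      refine Finset.sum_le_sum fun z' _ => le_of_eq (hmarg j x z')
    have hsum : ∑ z' : E, ENNReal.ofReal (M j x z') = 1 := by
      rw [← ENNReal.ofReal_sum_of_nonneg (fun z' _ => hM0 j x z'), hM1]
      exact ENNReal.ofReal_one
    have hsplit : Q {ω : ℤ → E → E | ω j x ∈ atomOf y₀}
        + Q {ω : ℤ → E → E | ω j x ∉ atomOf y₀} = 1 := by
      have := measure_add_measure_compl (μ := Q) hpre
      rwa [measure_univ, show {ω : ℤ → E → E | ω j x ∈ atomOf y₀}ᶜ
        = {ω : ℤ → E → E | ω j x ∉ atomOf y₀} from rfl] at this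
    have hfin : (∑ z' ∈ Finset.univ.filter (fun z' => z' ∉ atomOf y₀),
        ENNReal.ofReal (M j x z')) ≠ ⊤ :=
      (ENNReal.sum_lt_top.mpr fun _ _ => ENNReal.ofReal_lt_top).ne
    have hlow : ∑ z' ∈ Finset.univ.filter (fun z' => z' ∈ atomOf y₀), ENNReal.ofReal (M j x z')
        ≤ Q {ω : ℤ → E → E | ω j x ∈ atomOf y₀} := by
      have htot : (∑ z' ∈ Finset.univ.filter (fun z' => z' ∈ atomOf y₀),
            ENNReal.ofReal (M j x z'))
          + (∑ z' ∈ Finset.univ.filter (fun z' => z' ∉ atomOf y₀),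
            ENNReal.ofReal (M j x z')) = 1 := by
        rw [Finset.sum_filter_add_sum_filter_not]; exact hsum
      have : (∑ z' ∈ Finset.univ.filter (fun z' => z' ∈ atomOf y₀),
            ENNReal.ofReal (M j x z'))
          + (∑ z' ∈ Finset.univ.filter (fun z' => z' ∉ atomOf y₀),
            ENNReal.ofReal (M j x z'))
          ≤ Q {ω : ℤ → E → E | ω j x ∈ atomOf y₀}
          + (∑ z' ∈ Finset.univ.filter (fun z' => z' ∉ atomOf y₀),
            ENNReal.ofReal (M j x z')) := by
        rw [htot, ← hsplit]
        exact add_le_add_right hcov _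
      exact (ENNReal.add_le_add_iff_right hfin).mp this
    have houter : Q {ω : ℤ → E → E | ω j x ∈ atomOf y₀} ≤ ENNReal.ofReal (M j x y₀) := by
      rw [← hmarg j x y₀]
      exact hull_lemma Q j x y₀
    -- the sum over the atom contains both y₀ and z
    have hy₀mem : y₀ ∈ Finset.univ.filter (fun z' => z' ∈ atomOf y₀) := by
      simp [mem_atomOf_self]
    have hzmem : z ∈ (Finset.univ.filter (fun z' => z' ∈ atomOf y₀)).erase y₀ := by
      simp [hzne, hz]
    have hpair : ENNReal.ofReal (M j x y₀) + ENNReal.ofReal (M j x z)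
        ≤ ∑ z' ∈ Finset.univ.filter (fun z' => z' ∈ atomOf y₀), ENNReal.ofReal (M j x z') := by
      rw [← Finset.add_sum_erase _ _ hy₀mem]
      refine add_le_add_right ?_ _
      exact Finset.single_le_sum (f := fun z' => ENNReal.ofReal (M j x z'))
        (fun _ _ => zero_le) hzmem
    have hfinal : ENNReal.ofReal (M j x y₀) + ENNReal.ofReal (M j x z)
        ≤ ENNReal.ofReal (M j x y₀) + 0 := by
      rw [add_zero]
      exact le_trans hpair (le_trans hlow houter)
    have hz0 : ENNReal.ofReal (M j x z) = 0 :=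
      le_antisymm ((ENNReal.add_le_add_iff_left ENNReal.ofReal_ne_top).mp hfinal) zero_le
    have := ENNReal.ofReal_eq_zero.mp hz0
    linarith [hM0 j x z]
  -- main argument
  have hne : ∃ y' ∈ atomOf y, y' ≠ y := by
    by_contra hcon
    push_neg at hcon
    have hsub : atomOf y ⊆ {y} := fun y' hy' => hcon y' hy'
    have heq : atomOf y = {y} :=
      Set.Subset.antisymm hsub (Set.singleton_subset_iff.mpr (mem_atomOf_self y))
    exact hbad (heq ▸ measurableSet_atomOf y)
  obtain ⟨y', hy'mem, hy'ne⟩ := hne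
  exact sub y' y (atomOf_symm hy'mem) (Ne.symm hy'ne)

end Bad

section Key

variable {E : Type*} [Fintype E] [DecidableEq E] [MeasurableSpace E]

/-- σ-algebra generated by the coordinates in layers `Ioc n k`. -/
def mIoc (E : Type*) [MeasurableSpace E] (n k : ℤ) : MeasurableSpace (ℤ → E → E) :=
  ⨆ p ∈ {p : ℤ × E | n < p.1 ∧ p.1 ≤ k},
    MeasurableSpace.comap (fun ω : ℤ → E → E => ω p.1 p.2) inferInstance

/-- σ-algebra generated by the coordinates of layer `m`. -/
def mLayer (E : Type*) [MeasurableSpace E] (m : ℤ) : MeasurableSpace (ℤ → E → E) :=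
  ⨆ p ∈ {p : ℤ × E | p.1 = m},
    MeasurableSpace.comap (fun ω : ℤ → E → E => ω p.1 p.2) inferInstance

theorem comap_coord_le_pi (p : ℤ × E) :
    MeasurableSpace.comap (fun ω : ℤ → E → E => ω p.1 p.2) inferInstance
      ≤ (inferInstance : MeasurableSpace (ℤ → E → E)) :=
  Measurable.comap_le ((measurable_pi_apply p.2).comp (measurable_pi_apply p.1))

theorem mIoc_le (n k : ℤ) : mIoc E n k ≤ (inferInstance : MeasurableSpace (ℤ → E → E)) :=
  iSup₂_le fun p _ => comap_coord_le_pi p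

theorem mLayer_le (m : ℤ) : mLayer E m ≤ (inferInstance : MeasurableSpace (ℤ → E → E)) :=
  iSup₂_le fun p _ => comap_coord_le_pi p

theorem mLayer_le_mIoc {n k m : ℤ} (h1 : n < m) (h2 : m ≤ k) :
    mLayer E m ≤ mIoc E n k :=
  biSup_mono fun p hp => by simp only [Set.mem_setOf_eq] at *; omega

theorem mIoc_mono {n n' k : ℤ} (h : n ≤ n') : mIoc E n' k ≤ mIoc E n k :=
  biSup_mono fun p hp => by simp only [Set.mem_setOf_eq] at *; omega

theorem comap_coord_le_mLayer (m : ℤ) (x : E) :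
    MeasurableSpace.comap (fun ω : ℤ → E → E => ω m x) inferInstance ≤ mLayer E m :=
  le_iSup₂ (f := fun (p : ℤ × E) (_ : p ∈ {p : ℤ × E | p.1 = m}) =>
    MeasurableSpace.comap (fun ω : ℤ → E → E => ω p.1 p.2) inferInstance) (m, x) rfl

/-- The good event: all coordinates in layers `Ioc n k` have measurable singletons and
all chains started in `S` coalesce at `xstar`. -/
def DSet {E : Type*} [MeasurableSpace E] (xstar : E) (k n : ℤ) (S : Finset E) :
    Set (ℤ → E → E) :=
  {ω | (∀ p : ℤ × E, n < p.1 → p.1 ≤ k → MeasurableSet ({ω p.1 p.2} : Set E)) ∧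
       ∀ x ∈ S, PhiMap ω n k x = xstar}

theorem key_lemma (M : ℤ → E → E → ℝ) (hM0 : ∀ n x x', 0 ≤ M n x x')
    (hM1 : ∀ n x, ∑ x', M n x x' = 1)
    (Q : Measure (ℤ → E → E)) [IsProbabilityMeasure Q]
    (hind : iIndepFun (fun (p : ℤ × E) (ω : ℤ → E → E) => ω p.1 p.2) Q)
    (hmarg : ∀ (n : ℤ) (x x' : E), Q {ω | ω n x = x'} = ENNReal.ofReal (M n x x'))
    (k : ℤ) (xstar : E) :
    ∀ (j : ℕ) (n : ℤ), k = n + j → ∀ S : Finset E,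
      MeasurableSet[mIoc E n k] (DSet xstar k n S) ∧
      ENNReal.ofReal (∏ x ∈ S, backProd M n k x xstar) ≤ Q (DSet xstar k n S) := by
  classical
  intro j
  induction j with
  | zero =>
    intro n hn S
    have hnk : ¬ n < k := by push_cast at hn; omega
    by_cases hS : ∀ x ∈ S, x = xstar
    · have hD : DSet xstar k n S = Set.univ := by
        ext ω
        simp only [DSet, Set.mem_setOf_eq, Set.mem_univ, iff_true]
        constructor
        · intro p hp1 hp2
          exact absurd hp1 (by push_cast at hn; omega)
        · intro x hx
          rw [PhiMap_stop ω hnk]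
          exact hS x hx
      rw [hD]
      refine ⟨@MeasurableSet.univ _ (mIoc E n k), ?_⟩
      have h1 : ∏ x ∈ S, backProd M n k x xstar = 1 :=
        Finset.prod_eq_one fun x hx => by rw [backProd_stop M hnk, if_pos (hS x hx)]
      rw [h1, measure_univ]
      simp
    · push_neg at hS
      obtain ⟨x0, hx0S, hx0⟩ := hS
      have hD : DSet xstar k n S = ∅ := by
        ext ω
        simp only [DSet, Set.mem_setOf_eq, Set.mem_empty_iff_false, iff_false, not_and]
        intro _ h2
        exact hx0 (by rw [← PhiMap_stop ω hnk x0]; exact h2 x0 hx0S)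
      rw [hD]
      refine ⟨@MeasurableSet.empty _ (mIoc E n k), ?_⟩
      have h1 : ∏ x ∈ S, backProd M n k x xstar = 0 :=
        Finset.prod_eq_zero hx0S (by rw [backProd_stop M hnk, if_neg hx0])
      rw [h1]
      simp
  | succ j ih =>
    intro n hn S
    have hnk : n < k := by push_cast at hn; omega
    have hn' : k = (n + 1) + (j : ℤ) := by push_cast at hn ⊢; omega
    set Gf : Finset E := Finset.univ.filter (fun y => MeasurableSet ({y} : Set E)) with hGf
    set piF : Finset (E → E) := Fintype.piFinset (fun _ : E => Gf) with hpiF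
    set B : (E → E) → Set (ℤ → E → E) :=
      fun g => ⋂ x : E, {ω : ℤ → E → E | ω (n+1) x = g x} with hB
    set D1 : (E → E) → Set (ℤ → E → E) := fun g => DSet xstar k (n+1) (S.image g) with hD1
    have hsing : ∀ g ∈ piF, ∀ x : E, MeasurableSet ({g x} : Set E) := by
      intro g hg x
      have := Fintype.mem_piFinset.mp hg x
      rw [hGf] at this
      exact (Finset.mem_filter.mp this).2
    -- decomposition
    have hdecomp : DSet xstar k n S = ⋃ g ∈ piF, (B g ∩ D1 g) := by
      ext ω
      simp only [Set.mem_iUnion, Set.mem_inter_iff, exists_prop, DSet, Set.mem_setOf_eq,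
        hD1, hB, Set.mem_iInter]
      constructor
      · rintro ⟨h1, h2⟩
        refine ⟨fun x => ω (n+1) x, ?_, fun x => rfl, ?_, ?_⟩
        · rw [hpiF, Fintype.mem_piFinset]
          intro x
          rw [hGf]
          simp only [Finset.mem_filter, Finset.mem_univ, true_and]
          exact h1 ((n+1 : ℤ), x) (by omega) (by omega)
        · intro p hp1 hp2
          exact h1 p (by omega) hp2
        · intro y hy
          obtain ⟨x, hxS, rfl⟩ := Finset.mem_image.mp hy
          rw [← PhiMap_rec ω hnk x]
          exact h2 x hxS
      · rintro ⟨g, hg, hBg, hD1a, hD1b⟩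
        constructor
        · intro p hp1 hp2
          rcases eq_or_lt_of_le (by omega : n + 1 ≤ p.1) with he | hl
          · rw [← he, hBg p.2]
            exact hsing g hg p.2
          · exact hD1a p hl hp2
        · intro x hxS
          rw [PhiMap_rec ω hnk x, hBg x]
          exact hD1b (g x) (Finset.mem_image_of_mem g hxS)
    -- measurability of pieces
    have hBmeasL : ∀ g ∈ piF, MeasurableSet[mLayer E (n+1)] (B g) := by
      intro g hg
      refine MeasurableSet.iInter fun x => ?_
      refine comap_coord_le_mLayer (n+1) x _ ?_
      refine ⟨{g x}, hsing g hg x, ?_⟩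
      ext ω; simp
    -- independence
    have hii : iIndep (fun p : ℤ × E =>
        MeasurableSpace.comap (fun ω : ℤ → E → E => ω p.1 p.2) inferInstance) Q :=
      (iIndepFun_iff_iIndep _ _ _).mp hind
    have hIndep : Indep (mLayer E (n+1)) (mIoc E (n+1) k) Q := by
      have hd : Disjoint {p : ℤ × E | p.1 = n+1} {p : ℤ × E | n+1 < p.1 ∧ p.1 ≤ k} := by
        rw [Set.disjoint_left]
        intro p hp1 hp2
        simp only [Set.mem_setOf_eq] at hp1 hp2
        omega
      exact indep_iSup_of_disjoint (fun p => comap_coord_le_pi p) hii hd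
    -- measure of B g
    have hQB : ∀ g ∈ piF, Q (B g) = ∏ x : E, ENNReal.ofReal (M (n+1) x (g x)) := by
      intro g hg
      have h := hind.measure_inter_preimage_eq_mul
        (Finset.univ.image (fun x : E => ((n+1 : ℤ), x))) (sets := fun p => {g p.2})
        (fun p _ => hsing g hg p.2)
      have hinj : ∀ a ∈ Finset.univ, ∀ b ∈ Finset.univ,
          (fun x : E => ((n+1 : ℤ), x)) a = (fun x : E => ((n+1 : ℤ), x)) b → a = b := by
        intro a _ b _ hab; simpa using hab
      rw [Finset.prod_image hinj] at h
      have hset : (⋂ p ∈ Finset.univ.image (fun x : E => ((n+1 : ℤ), x)),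
          (fun ω : ℤ → E → E => ω p.1 p.2) ⁻¹' {g p.2}) = B g := by
        ext ω
        simp only [Set.mem_iInter, Set.mem_preimage, Finset.mem_image, Set.mem_singleton_iff,
          hB, Set.mem_setOf_eq]
        constructor
        · intro hmem x
          exact hmem ((n+1 : ℤ), x) ⟨x, Finset.mem_univ x, rfl⟩
        · rintro hmem p ⟨x, -, rfl⟩
          exact hmem x
      rw [hset] at h
      rw [h]
      refine Finset.prod_congr rfl fun x _ => ?_
      rw [show ((fun ω : ℤ → E → E => ω (n+1) x) ⁻¹' {g x})
          = {ω : ℤ → E → E | ω (n+1) x = g x} by ext ω; simp]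
      exact hmarg (n+1) x (g x)
    -- per-piece lower bound
    have hpiece : ∀ g ∈ piF,
        (∏ x : E, ENNReal.ofReal (M (n+1) x (g x))) *
          ENNReal.ofReal (∏ x ∈ S, backProd M (n+1) k (g x) xstar)
        ≤ Q (B g ∩ D1 g) := by
      intro g hg
      have hD1m := (ih (n+1) hn' (S.image g)).1
      have hD1q := (ih (n+1) hn' (S.image g)).2
      have heq : Q (B g ∩ D1 g) = Q (B g) * Q (D1 g) :=
        (Indep_iff _ _ _).mp hIndep _ _ (hBmeasL g hg) hD1m
      rw [heq, hQB g hg]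
      refine mul_le_mul_right ?_ _
      refine le_trans ?_ hD1q
      apply ENNReal.ofReal_le_ofReal
      exact prod_comp_le_prod_image (f := fun y => backProd M (n+1) k y xstar)
        (fun y => backProd_nonneg M hM0 _ _ _ _)
        (fun y => backProd_le_one M hM0 hM1 _ _ _ _) S g
    -- disjointness
    have hdisj : (↑piF : Set (E → E)).PairwiseDisjoint (fun g => B g ∩ D1 g) := by
      intro g hg g' hg' hne
      rw [Function.onFun, Set.disjoint_left]
      intro ω hω hω'
      refine hne (funext fun x => ?_)
      have h1 : ω (n+1) x = g x := Set.mem_iInter.mp hω.1 x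
      have h2 : ω (n+1) x = g' x := Set.mem_iInter.mp hω'.1 x
      rw [← h1, h2]
    have hambient : ∀ g ∈ piF, MeasurableSet (B g ∩ D1 g) := fun g hg =>
      ((mLayer_le (n+1)) _ (hBmeasL g hg)).inter
        ((mIoc_le (n+1) k) _ (ih (n+1) hn' (S.image g)).1)
    -- the sum over Gf of M-weights reduces to the full sum
    have hGsum : ∀ (x : E) (F : E → ℝ),
        ∑ z ∈ Gf, M (n+1) x z * F z = ∑ z, M (n+1) x z * F z := by
      intro x F
      refine Finset.sum_subset (Finset.subset_univ _) fun z _ hz => ?_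
      have hbadz : ¬ MeasurableSet ({z} : Set E) := by
        intro hm
        exact hz (by rw [hGf]; simp [hm])
      rw [bad_val_zero M hM0 hM1 Q hmarg (n+1) x z hbadz, zero_mul]
    constructor
    · rw [hdecomp]
      refine piF.measurableSet_biUnion fun g hg => ?_
      exact ((mLayer_le_mIoc (by omega) (by omega)) _ (hBmeasL g hg)).inter
        ((mIoc_mono (by omega)) _ (ih (n+1) hn' (S.image g)).1)
    · rw [hdecomp, measure_biUnion_finset hdisj hambient]
      calc ENNReal.ofReal (∏ x ∈ S, backProd M n k x xstar)
          = ∏ x : E, (if x ∈ S then ENNReal.ofReal (backProd M n k x xstar) else 1) := by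
            rw [Finset.prod_ite_mem, Finset.univ_inter,
              ← ENNReal.ofReal_prod_of_nonneg (fun x _ => backProd_nonneg M hM0 n k x xstar)]
        _ = ∏ x : E, ∑ z ∈ Gf, ENNReal.ofReal (M (n+1) x z) *
              (if x ∈ S then ENNReal.ofReal (backProd M (n+1) k z xstar) else 1) := by
            refine Finset.prod_congr rfl fun x _ => ?_
            by_cases hxS : x ∈ S
            · simp only [hxS, if_true]
              have e1 : ∑ z ∈ Gf, ENNReal.ofReal (M (n+1) x z) *
                    ENNReal.ofReal (backProd M (n+1) k z xstar)
                  = ENNReal.ofReal (∑ z ∈ Gf, M (n+1) x z * backProd M (n+1) k z xstar) := by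
                rw [ENNReal.ofReal_sum_of_nonneg (fun z _ =>
                  mul_nonneg (hM0 _ _ _) (backProd_nonneg M hM0 _ _ _ _))]
                exact Finset.sum_congr rfl fun z _ => (ENNReal.ofReal_mul (hM0 _ _ _)).symm
              rw [e1, hGsum x (fun z => backProd M (n+1) k z xstar), ← backProd_rec M hnk]
            · simp only [hxS, if_false, mul_one]
              have e1 : ∑ z ∈ Gf, ENNReal.ofReal (M (n+1) x z)
                  = ENNReal.ofReal (∑ z ∈ Gf, M (n+1) x z) :=
                (ENNReal.ofReal_sum_of_nonneg (fun z _ => hM0 _ _ _)).symm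
              have e2 : ∑ z ∈ Gf, M (n+1) x z = 1 := by
                have := hGsum x (fun _ => 1)
                simp only [mul_one] at this
                rw [this, hM1]
              rw [e1, e2, ENNReal.ofReal_one]
        _ = ∑ g ∈ piF, ∏ x : E, ENNReal.ofReal (M (n+1) x (g x)) *
              (if x ∈ S then ENNReal.ofReal (backProd M (n+1) k (g x) xstar) else 1) := by
            rw [hpiF]
            exact Finset.prod_univ_sum (fun _ => Gf) _
        _ ≤ ∑ g ∈ piF, Q (B g ∩ D1 g) := by
            refine Finset.sum_le_sum fun g hg => ?_
            rw [Finset.prod_mul_distrib]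
            have e1 : (∏ x : E, (if x ∈ S then
                  ENNReal.ofReal (backProd M (n+1) k (g x) xstar) else 1))
                = ∏ x ∈ S, ENNReal.ofReal (backProd M (n+1) k (g x) xstar) := by
              rw [Finset.prod_ite_mem, Finset.univ_inter]
            rw [e1, ← ENNReal.ofReal_prod_of_nonneg (fun x _ =>
              backProd_nonneg M hM0 _ _ _ _)]
            exact hpiece g hg

end Key


/-- If the backward product `M_{n,k}` has a column `x*` uniformly bounded below by
`ε > 0`, then under the independent coupling the probability that the image of
`Φ_{n,k}` is a singleton is at least `ε^s`, `s = card E`. -/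
theorem coalescence_prob_lower_bound {E : Type*} [Fintype E] [Nonempty E] [DecidableEq E]
    [MeasurableSpace E]
    (M : ℤ → E → E → ℝ) (hM0 : ∀ n x x', 0 ≤ M n x x') (hM1 : ∀ n x, ∑ x', M n x x' = 1)
    (Q : Measure (ℤ → E → E)) [IsProbabilityMeasure Q]
    (hind : iIndepFun (fun (p : ℤ × E) (ω : ℤ → E → E) => ω p.1 p.2) Q)
    (hmarg : ∀ (n : ℤ) (x x' : E), Q {ω | ω n x = x'} = ENNReal.ofReal (M n x x'))
    (n k : ℤ) (hnk : n < k) (hk : k ≤ 0)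
    (ε : ℝ) (hε : 0 < ε) (xstar : E) (hmin : ∀ x, ε ≤ backProd M n k x xstar) :
    ENNReal.ofReal (ε ^ Fintype.card E)
      ≤ Q {ω | ∃ c, ∀ x, PhiMap ω n k x = c} := by
  classical
  obtain ⟨-, hQ⟩ := key_lemma M hM0 hM1 Q hind hmarg k xstar (k - n).toNat n (by omega)
    Finset.univ
  refine le_trans (le_trans ?_ hQ) (measure_mono ?_)
  · apply ENNReal.ofReal_le_ofReal
    calc ε ^ Fintype.card E = ∏ _x : E, ε := by rw [Finset.prod_const, Finset.card_univ]
    _ ≤ ∏ x : E, backProd M n k x xstar :=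
        Finset.prod_le_prod (fun _ _ => le_of_lt hε) (fun x _ => hmin x)
  · intro ω hω
    exact ⟨xstar, fun x => hω.2 x (Finset.mem_univ x)⟩
end

section
/- Under the independent coupling measure Q for a sequence of Markov kernels M on a finite set E, for any n, k, k' with k' < k < n ≤ 0, the coalescence times satisfy Q(T_n < k') ≤ Q(T_n < k) · Q(T_k < k'), i.e., the tail probabilities of coalescence times are submultiplicative. -/
open scoped BigOperators
open MeasureTheory ProbabilityTheory Filter

/-- The event `{T_n < k}`: no coalescence of `Φ_{m,n}` for any `m` with `k ≤ m < n`. -/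
def noCoalEvent {E : Type*} (n k : ℤ) : Set (ℤ → E → E) :=
  {ω | ∀ m, k ≤ m → m < n → ¬ ∃ c, ∀ x, PhiMap ω m n x = c}

section Aux
variable {E : Type*}

lemma PhiMap_of_lt (ω : ℤ → E → E) {m n : ℤ} (h : m < n) (x : E) :
    PhiMap ω m n x = PhiMap ω (m + 1) n (ω (m + 1) x) := by
  rw [PhiMap, dif_pos h]

lemma PhiMap_of_ge (ω : ℤ → E → E) {m n : ℤ} (h : ¬ m < n) (x : E) :
    PhiMap ω m n x = x := by
  rw [PhiMap, dif_neg h]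

lemma PhiMap_comp (ω : ℤ → E → E) {k n : ℤ} (hkn : k ≤ n) :
    ∀ (j : ℕ) (m : ℤ), m + j = k → ∀ x,
      PhiMap ω m n x = PhiMap ω k n (PhiMap ω m k x) := by
  intro j
  induction j with
  | zero =>
    intro m hm x
    have hmk : m = k := by omega
    subst hmk
    rw [PhiMap_of_ge ω (lt_irrefl m) x]
  | succ j ih =>
    intro m hm x
    have hmk : m < k := by omega
    rw [PhiMap_of_lt ω (show m < n by omega) x, PhiMap_of_lt ω hmk x]
    exact ih (m + 1) (by omega) _

lemma PhiMap_congr (ω ω' : ℤ → E → E) {n : ℤ} :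
    ∀ (j : ℕ) (m : ℤ), m + j = n → (∀ t, m < t → t ≤ n → ω t = ω' t) →
      ∀ x, PhiMap ω m n x = PhiMap ω' m n x := by
  intro j
  induction j with
  | zero =>
    intro m hm _ x
    have hmn : m = n := by omega
    subst hmn
    rw [PhiMap_of_ge ω (lt_irrefl m) x, PhiMap_of_ge ω' (lt_irrefl m) x]
  | succ j ih =>
    intro m hm h x
    have hmn : m < n := by omega
    rw [PhiMap_of_lt ω hmn x, PhiMap_of_lt ω' hmn x,
      h (m + 1) (by omega) (by omega)]
    exact ih (m + 1) (by omega) (fun t ht ht' => h t (by omega) ht') _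

lemma noCoal_congr (ω ω' : ℤ → E → E) {n k : ℤ}
    (h : ∀ t, k < t → t ≤ n → ω t = ω' t) (hω : ω ∈ noCoalEvent n k) :
    ω' ∈ noCoalEvent n k := by
  intro m hkm hmn hc
  obtain ⟨c, hc⟩ := hc
  refine hω m hkm hmn ⟨c, fun x => ?_⟩
  rw [PhiMap_congr ω ω' (n - m).toNat m (by omega)
    (fun t ht ht' => h t (by omega) ht') x]
  exact hc x

/-- `{T_n < k'} ⊆ {T_n < k}` for `k' ≤ k`. -/
lemma noCoal_mono {n k k' : ℤ} (h : k' ≤ k) :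
    noCoalEvent (E := E) n k' ⊆ noCoalEvent n k :=
  fun ω hω m hkm hmn => hω m (by omega) hmn

/-- `{T_n < k'} ⊆ {T_k < k'}` for `k ≤ n`. -/
lemma noCoal_sub {n k k' : ℤ} (hk : k ≤ n) :
    noCoalEvent (E := E) n k' ⊆ noCoalEvent k k' := by
  intro ω hω m hkm hmk hc
  obtain ⟨c, hc⟩ := hc
  refine hω m hkm (by omega) ⟨PhiMap ω k n c, fun x => ?_⟩
  rw [PhiMap_comp ω hk (k - m).toNat m (by omega) x, hc x]

/-- The measurable atom of a point. -/
def atomE {E : Type*} [MeasurableSpace E] (e : E) : Set E :=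
  ⋂₀ {S : Set E | MeasurableSet S ∧ e ∈ S}

lemma measurableSet_atomE [Finite E] [MeasurableSpace E] (e : E) :
    MeasurableSet (atomE e) :=
  MeasurableSet.sInter (Set.to_countable _) (fun _ hS => hS.1)

lemma mem_atomE_self [MeasurableSpace E] (e : E) : e ∈ atomE e :=
  fun _ hS => hS.2

lemma atomE_subset [MeasurableSpace E] {e : E} {S : Set E}
    (hS : MeasurableSet S) (he : e ∈ S) : atomE e ⊆ S :=
  Set.sInter_subset_of_mem ⟨hS, he⟩

lemma mem_iff_of_mem_atomE [MeasurableSpace E] {e x : E} (hx : x ∈ atomE e)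
    {S : Set E} (hS : MeasurableSet S) : (x ∈ S ↔ e ∈ S) := by
  constructor
  · intro hxS
    by_contra heS
    exact (atomE_subset hS.compl heS) hx hxS
  · intro heS
    exact atomE_subset hS heS hx

lemma atomE_symm [MeasurableSpace E] {e x : E} (hx : x ∈ atomE e) :
    e ∈ atomE x :=
  fun S hS => ((mem_iff_of_mem_atomE hx hS.1).mp hS.2)

/-- Two points of a pi space that are indistinguishable coordinatewise by measurable
sets are indistinguishable by measurable sets of the pi space. -/
lemma mem_iff_mem_of_pi {ι β : Type*} [MeasurableSpace β] (a b : ι → β)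
    (h : ∀ (i : ι) (S : Set β), MeasurableSet S → (a i ∈ S ↔ b i ∈ S)) :
    ∀ B : Set (ι → β), MeasurableSet B → (a ∈ B ↔ b ∈ B) := by
  intro B hB
  set C : Set (Set (ι → β)) :=
    {s | ∃ (i : ι) (S : Set β), MeasurableSet S ∧ s = (fun g => g i) ⁻¹' S} with hC
  have hle : (MeasurableSpace.pi : MeasurableSpace (ι → β)) ≤
      MeasurableSpace.generateFrom C := by
    refine iSup_le fun i => ?_
    intro s hs
    obtain ⟨S, hS, rfl⟩ := hs
    exact MeasurableSpace.measurableSet_generateFrom ⟨i, S, hS, rfl⟩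
  have hB' : MeasurableSet[MeasurableSpace.generateFrom C] B := hle _ hB
  refine MeasurableSpace.generateFrom_induction C
    (fun s _ => (a ∈ s ↔ b ∈ s)) ?_ ?_ ?_ ?_ B hB'
  · rintro t ⟨i, S, hS, rfl⟩ _
    exact h i S hS
  · simp
  · intro t _ ht
    simp [ht]
  · intro s _ hs
    simp only [Set.mem_iUnion]
    exact exists_congr hs

/-- Replacing one coordinate value by an atom-equivalent value does not change
membership in measurable sets of `ℤ → E → E`. -/
lemma swap_mem_iff [MeasurableSpace E] (ω u : ℤ → E → E) (t : ℤ) (y : E) (e : E)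
    (hω : ω t y ∈ atomE e) (hu1 : u t y = e)
    (hu2 : ∀ s z, ¬(s = t ∧ z = y) → u s z = ω s z)
    {B : Set (ℤ → E → E)} (hB : MeasurableSet B) :
    (ω ∈ B ↔ u ∈ B) := by
  refine mem_iff_mem_of_pi ω u ?_ B hB
  intro s D hD
  by_cases hst : s = t
  · subst hst
    refine mem_iff_mem_of_pi (ω s) (u s) ?_ D hD
    intro z S hS
    by_cases hzy : z = y
    · subst hzy
      rw [hu1]
      exact mem_iff_of_mem_atomE hω hS
    · rw [hu2 s z (by tauto)]
  · have : u s = ω s := funext fun z => hu2 s z (by tauto)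
    rw [this]

end Aux

open scoped ENNReal

/-- Submultiplicativity of tail probabilities of coalescence times:
`Q(T_n < k') ≤ Q(T_n < k) · Q(T_k < k')` for `k' < k < n ≤ 0`. -/
theorem coalescence_tail_submultiplicative {E : Type*} [Fintype E] [Nonempty E]
    [MeasurableSpace E]
    (M : ℤ → E → E → ℝ) (hM0 : ∀ n x x', 0 ≤ M n x x') (hM1 : ∀ n x, ∑ x', M n x x' = 1)
    (Q : Measure (ℤ → E → E)) [IsProbabilityMeasure Q]
    (hind : iIndepFun (fun (p : ℤ × E) (ω : ℤ → E → E) => ω p.1 p.2) Q)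
    (hmarg : ∀ (n : ℤ) (x x' : E), Q {ω | ω n x = x'} = ENNReal.ofReal (M n x x'))
    (n k k' : ℤ) (h1 : k' < k) (h2 : k < n) (h3 : n ≤ 0) :
    Q (noCoalEvent n k') ≤ Q (noCoalEvent n k) * Q (noCoalEvent k k') := by
  classical
  have hev : ∀ (t : ℤ) (y : E), Measurable fun ω : ℤ → E → E => ω t y :=
    fun t y => (measurable_pi_apply y).comp (measurable_pi_apply t)
  have hatom_meas : ∀ (t : ℤ) (y e : E),
      MeasurableSet {ω : ℤ → E → E | ω t y ∈ atomE e} :=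
    fun t y e => (hev t y) (measurableSet_atomE e)
  -- marginals of atoms
  have hmargatom : ∀ (t : ℤ) (y e : E),
      Q {ω | ω t y ∈ atomE e} = ENNReal.ofReal (M t y e) := by
    intro t y e
    rw [← hmarg t y e]
    refine le_antisymm ?_ (measure_mono fun ω hω => ?_)
    · rw [← measure_toMeasurable {ω : ℤ → E → E | ω t y = e}]
      refine measure_mono fun ω (hω : ω t y ∈ atomE e) => ?_
      set u : ℤ → E → E := fun s z => if s = t ∧ z = y then e else ω s z with hudef
      have hu1 : u t y = e := if_pos ⟨rfl, rfl⟩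
      have hu2 : ∀ s z, ¬(s = t ∧ z = y) → u s z = ω s z := fun s z h => if_neg h
      have hmem : u ∈ toMeasurable Q {ω : ℤ → E → E | ω t y = e} :=
        subset_toMeasurable _ _ hu1
      exact (swap_mem_iff ω u t y e hω hu1 hu2
        (measurableSet_toMeasurable _ _)).mpr hmem
    · have hωe : ω t y = e := hω
      show ω t y ∈ atomE e
      rw [hωe]
      exact mem_atomE_self e
  have hsum : ∀ (t : ℤ) (y : E), ∑ e : E, Q {ω | ω t y ∈ atomE e} = 1 := by
    intro t y
    simp only [hmargatom]
    rw [← ENNReal.ofReal_sum_of_nonneg (fun i _ => hM0 t y i), hM1 t y,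
      ENNReal.ofReal_one]
  -- non-singleton atoms are null
  have hnull : ∀ (t : ℤ) (y x : E), (∃ e, e ∈ atomE x ∧ e ≠ x) →
      Q {ω | ω t y ∈ atomE x} = 0 := by
    rintro t y x ⟨e, he, hex⟩
    have hcover : (⋃ e' ∈ Finset.univ.erase x, {ω : ℤ → E → E | ω t y ∈ atomE e'})
        = Set.univ := by
      ext ω
      simp only [Set.mem_iUnion, Set.mem_univ, iff_true, Finset.mem_erase,
        Set.mem_setOf_eq, exists_prop]
      by_cases h : ω t y = x
      · exact ⟨e, ⟨hex, Finset.mem_univ e⟩, by rw [h]; exact atomE_symm he⟩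
      · exact ⟨ω t y, ⟨h, Finset.mem_univ _⟩, mem_atomE_self _⟩
    have h1le : (1 : ℝ≥0∞) ≤ ∑ e' ∈ Finset.univ.erase x,
        Q {ω | ω t y ∈ atomE e'} := by
      calc (1 : ℝ≥0∞)
          = Q (⋃ e' ∈ Finset.univ.erase x, {ω : ℤ → E → E | ω t y ∈ atomE e'}) := by
            rw [hcover, measure_univ]
        _ ≤ _ := measure_biUnion_finset_le _ _
    have hsplit : Q {ω | ω t y ∈ atomE x} +
        ∑ e' ∈ Finset.univ.erase x, Q {ω | ω t y ∈ atomE e'} = 1 := by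
      rw [Finset.add_sum_erase Finset.univ (fun e => Q {ω | ω t y ∈ atomE e}) (Finset.mem_univ x)]
      exact hsum t y
    have hle0 : Q {ω | ω t y ∈ atomE x} + 1 ≤ 0 + 1 := by
      calc Q {ω | ω t y ∈ atomE x} + 1
          ≤ Q {ω | ω t y ∈ atomE x} +
            ∑ e' ∈ Finset.univ.erase x, Q {ω | ω t y ∈ atomE e'} :=
            add_le_add_right h1le _
        _ = 1 := hsplit
        _ = 0 + 1 := (zero_add 1).symm
    have := (ENNReal.add_le_add_iff_right ENNReal.one_ne_top).mp hle0
    exact le_antisymm this zero_le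
  -- null set outside which all relevant coordinates have singleton atoms
  set N : Set (ℤ → E → E) :=
    ⋃ (t : ℤ) (_ : t ∈ Finset.Ioc k' n) (y : E) (x : E)
      (_ : ∃ e, e ∈ atomE x ∧ e ≠ x), {ω | ω t y ∈ atomE x} with hN
  have hNnull : Q N = 0 := by
    refine measure_iUnion_null fun t => measure_iUnion_null fun _ =>
      measure_iUnion_null fun y => measure_iUnion_null fun x =>
      measure_iUnion_null fun hx => hnull t y x hx
  have hgood : ∀ ω, ω ∉ N → ∀ t, t ∈ Finset.Ioc k' n → ∀ (y c : E),
      ω t y ∈ atomE c → c = ω t y := by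
    intro ω hω t ht y c hc
    by_contra hne
    refine hω ?_
    refine Set.mem_iUnion.mpr ⟨t, Set.mem_iUnion.mpr ⟨ht, Set.mem_iUnion.mpr
      ⟨y, Set.mem_iUnion.mpr ⟨c, Set.mem_iUnion.mpr
        ⟨⟨ω t y, hc, fun h => hne h.symm⟩, hc⟩⟩⟩⟩⟩
  -- the two blocks of coordinates
  set S₁ : Finset (ℤ × E) := Finset.Ioc k n ×ˢ Finset.univ with hS₁
  set S₂ : Finset (ℤ × E) := Finset.Ioc k' k ×ˢ Finset.univ with hS₂
  set φ₁ : (ℤ → E → E) → (S₁ → E) := fun ω i => ω (↑i : ℤ × E).1 (↑i : ℤ × E).2 with hφ₁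
  set φ₂ : (ℤ → E → E) → (S₂ → E) := fun ω i => ω (↑i : ℤ × E).1 (↑i : ℤ × E).2 with hφ₂
  set C₁ : Set (S₁ → E) :=
    ⋃ (g : S₁ → E) (_ : ∃ f : ℤ → E → E, f ∈ noCoalEvent n k ∧
      ∀ i : S₁, g i = f (↑i : ℤ × E).1 (↑i : ℤ × E).2),
      {h : S₁ → E | ∀ i, h i ∈ atomE (g i)} with hC₁
  set C₂ : Set (S₂ → E) :=
    ⋃ (g : S₂ → E) (_ : ∃ f : ℤ → E → E, f ∈ noCoalEvent k k' ∧
      ∀ i : S₂, g i = f (↑i : ℤ × E).1 (↑i : ℤ × E).2),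
      {h : S₂ → E | ∀ i, h i ∈ atomE (g i)} with hC₂
  have hC₁meas : MeasurableSet C₁ := by
    refine MeasurableSet.iUnion fun g => MeasurableSet.iUnion fun _ => ?_
    have : {h : S₁ → E | ∀ i, h i ∈ atomE (g i)}
        = ⋂ i, (fun h : S₁ → E => h i) ⁻¹' atomE (g i) := by
      ext h; simp [Set.mem_iInter]
    rw [this]
    exact MeasurableSet.iInter fun i => (measurable_pi_apply i) (measurableSet_atomE _)
  have hC₂meas : MeasurableSet C₂ := by
    refine MeasurableSet.iUnion fun g => MeasurableSet.iUnion fun _ => ?_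
    have : {h : S₂ → E | ∀ i, h i ∈ atomE (g i)}
        = ⋂ i, (fun h : S₂ → E => h i) ⁻¹' atomE (g i) := by
      ext h; simp [Set.mem_iInter]
    rw [this]
    exact MeasurableSet.iInter fun i => (measurable_pi_apply i) (measurableSet_atomE _)
  -- noCoal events agree with the cylinder events up to N
  have hsub₁ : noCoalEvent n k ⊆ φ₁ ⁻¹' C₁ := by
    intro ω hω
    refine Set.mem_iUnion.mpr ⟨fun i => ω (↑i : ℤ × E).1 (↑i : ℤ × E).2,
      Set.mem_iUnion.mpr ⟨⟨ω, hω, fun i => rfl⟩, fun i => mem_atomE_self _⟩⟩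
  have hsub₂ : noCoalEvent k k' ⊆ φ₂ ⁻¹' C₂ := by
    intro ω hω
    refine Set.mem_iUnion.mpr ⟨fun i => ω (↑i : ℤ × E).1 (↑i : ℤ × E).2,
      Set.mem_iUnion.mpr ⟨⟨ω, hω, fun i => rfl⟩, fun i => mem_atomE_self _⟩⟩
  have hsub₁' : φ₁ ⁻¹' C₁ ⊆ noCoalEvent n k ∪ N := by
    intro ω hω
    by_cases hωN : ω ∈ N
    · exact Or.inr hωN
    · left
      simp only [Set.mem_preimage, hC₁, Set.mem_iUnion] at hω
      obtain ⟨g, ⟨f, hf, hgf⟩, hmem⟩ := hω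
      refine noCoal_congr f ω (fun t ht htn => ?_) hf
      funext y
      have hi : ((t, y) : ℤ × E) ∈ S₁ := by
        rw [hS₁, Finset.mem_product]
        exact ⟨Finset.mem_Ioc.mpr ⟨ht, htn⟩, Finset.mem_univ _⟩
      have h1 := hmem ⟨(t, y), hi⟩
      rw [hgf ⟨(t, y), hi⟩] at h1
      exact (hgood ω hωN t (Finset.mem_Ioc.mpr ⟨by omega, htn⟩) y (f t y) h1).symm.symm
  have hsub₂' : φ₂ ⁻¹' C₂ ⊆ noCoalEvent k k' ∪ N := by
    intro ω hω
    by_cases hωN : ω ∈ N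
    · exact Or.inr hωN
    · left
      simp only [Set.mem_preimage, hC₂, Set.mem_iUnion] at hω
      obtain ⟨g, ⟨f, hf, hgf⟩, hmem⟩ := hω
      refine noCoal_congr f ω (fun t ht htn => ?_) hf
      funext y
      have hi : ((t, y) : ℤ × E) ∈ S₂ := by
        rw [hS₂, Finset.mem_product]
        exact ⟨Finset.mem_Ioc.mpr ⟨ht, htn⟩, Finset.mem_univ _⟩
      have h1 := hmem ⟨(t, y), hi⟩
      rw [hgf ⟨(t, y), hi⟩] at h1
      exact (hgood ω hωN t (Finset.mem_Ioc.mpr ⟨ht, by omega⟩) y (f t y) h1).symm.symm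
  have hQ₁ : Q (φ₁ ⁻¹' C₁) = Q (noCoalEvent n k) := by
    refine le_antisymm ?_ (measure_mono hsub₁)
    calc Q (φ₁ ⁻¹' C₁) ≤ Q (noCoalEvent n k ∪ N) := measure_mono hsub₁'
      _ ≤ Q (noCoalEvent n k) + Q N := measure_union_le _ _
      _ = Q (noCoalEvent n k) := by rw [hNnull, add_zero]
  have hQ₂ : Q (φ₂ ⁻¹' C₂) = Q (noCoalEvent k k') := by
    refine le_antisymm ?_ (measure_mono hsub₂)
    calc Q (φ₂ ⁻¹' C₂) ≤ Q (noCoalEvent k k' ∪ N) := measure_mono hsub₂'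
      _ ≤ Q (noCoalEvent k k') + Q N := measure_union_le _ _
      _ = Q (noCoalEvent k k') := by rw [hNnull, add_zero]
  -- independence of the two blocks
  have hdisj : Disjoint S₁ S₂ := by
    rw [Finset.disjoint_left]
    rintro ⟨t, y⟩ hp hp'
    rw [hS₁, Finset.mem_product, Finset.mem_Ioc] at hp
    rw [hS₂, Finset.mem_product, Finset.mem_Ioc] at hp'
    omega
  have hIF := hind.indepFun_finset S₁ S₂ hdisj (fun p => hev p.1 p.2)
  have hmul : Q (φ₁ ⁻¹' C₁ ∩ φ₂ ⁻¹' C₂) = Q (φ₁ ⁻¹' C₁) * Q (φ₂ ⁻¹' C₂) :=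
    hIF.measure_inter_preimage_eq_mul C₁ C₂ hC₁meas hC₂meas
  calc Q (noCoalEvent n k')
      ≤ Q (φ₁ ⁻¹' C₁ ∩ φ₂ ⁻¹' C₂) := by
        refine measure_mono fun ω hω => ⟨hsub₁ (noCoal_mono h1.le hω),
          hsub₂ (noCoal_sub h2.le hω)⟩
    _ = Q (φ₁ ⁻¹' C₁) * Q (φ₂ ⁻¹' C₂) := hmul
    _ = Q (noCoalEvent n k) * Q (noCoalEvent k k') := by rw [hQ₁, hQ₂]
end

section
/- Let M = (M_n)_{n≤0} be Markov kernels on finite E with at least one sequence of absolute probabilities π, and let P_π be the law on E^T of the nonhomogeneous Markov chain with kernels M and marginals π. If there exists a tail event A ∈ ∩_{n≤0} σ(X_k; k ≤ n) with 0 < P_π(A) < 1, then M admits at least two distinct sequences of absolute probabilities. -/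
open scoped BigOperators
open MeasureTheory Filter
set_option linter.unusedSectionVars false


/-- A sequence of absolute probabilities for the kernels `M` (on nonpositive times). -/
def IsAbsProbSeq {E : Type*} [Fintype E] (M : ℤ → E → E → ℝ) (π : ℤ → E → ℝ) : Prop :=
  ∀ n ≤ (0 : ℤ), (∀ x, 0 ≤ π n x) ∧ (∑ x, π n x = 1) ∧
    ∀ x, ∑ z, π (n - 1) z * M n z x = π n x

/-- `P` is the law of the nonhomogeneous Markov chain with kernels `M` and
marginals `π`, in terms of its finite dimensional distributions on nonpositive times. -/
def IsLawOf {E : Type*} [Fintype E] [MeasurableSpace E] (M : ℤ → E → E → ℝ)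
    (π : ℤ → E → ℝ) (P : Measure (ℤ → E)) : Prop :=
  ∀ n ≤ (0 : ℤ), ∀ f : ℤ → E,
    P {ω | ∀ m, n ≤ m → m ≤ 0 → ω m = f m}
      = ENNReal.ofReal (π n (f n) * ∏ k ∈ Finset.Icc (n + 1) 0, M k (f (k - 1)) (f k))

/-- The σ-algebra `σ(X_k ; k ≤ n)` generated by coordinates up to time `n`. -/
def coordSigmaLE (E : Type*) [MeasurableSpace E] (n : ℤ) : MeasurableSpace (ℤ → E) :=
  ⨆ k ∈ Set.Iic n, MeasurableSpace.comap (fun ω : ℤ → E => ω k) inferInstance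

/-- The tail σ-algebra `⋂_{n ≤ 0} σ(X_k ; k ≤ n)`. -/
def tailSigma (E : Type*) [MeasurableSpace E] : MeasurableSpace (ℤ → E) :=
  ⨅ n : ℤ, coordSigmaLE E n

namespace TailAux

open Set MeasurableSpace

variable {E : Type*} [Fintype E] [Nonempty E] [MeasurableSpace E]

/-- point cylinder fixing coordinates on `[a, b]` to the values of `f`. -/
def cylSet (a b : ℤ) (f : ℤ → E) : Set (ℤ → E) := {ω | ∀ m, a ≤ m → m ≤ b → ω m = f m}

lemma cyl_single (a : ℤ) (f : ℤ → E) : cylSet a a f = {ω : ℤ → E | ω a = f a} := by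
  ext ω
  constructor
  · exact fun h => h a le_rfl le_rfl
  · intro h m h1 h2
    have : m = a := le_antisymm h2 h1
    subst this; exact h

variable (M : ℤ → E → E → ℝ) (π : ℤ → E → ℝ)

/-- the weight of a point cylinder on `[a,b]`. -/
noncomputable def wt (a b : ℤ) (f : ℤ → E) : ℝ :=
  π a (f a) * ∏ k ∈ Finset.Icc (a + 1) b, M k (f (k - 1)) (f k)

lemma Icc_split_top {a n : ℤ} (h : a ≤ n) :
    Finset.Icc a n = insert n (Finset.Icc a (n - 1)) := by
  ext k; simp only [Finset.mem_Icc, Finset.mem_insert]; omega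

lemma wt_single (a : ℤ) (f : ℤ → E) : wt M π a a f = π a (f a) := by
  rw [wt, Finset.Icc_eq_empty (by omega : ¬ a + 1 ≤ a), Finset.prod_empty, mul_one]

lemma wt_update_top {a n : ℤ} (h : a ≤ n - 1) (f : ℤ → E) (x : E) :
    wt M π a n (Function.update f n x) = wt M π a (n - 1) f * M n (f (n - 1)) x := by
  unfold wt
  rw [Icc_split_top (by omega : a + 1 ≤ n),
    Finset.prod_insert (by simp [Finset.mem_Icc])]
  rw [Function.update_of_ne (by omega : a ≠ n), Function.update_self,
    Function.update_of_ne (by omega : n - 1 ≠ n)]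
  rw [Finset.prod_congr rfl (fun k hk => ?_)]
  · ring
  · rw [Finset.mem_Icc] at hk
    rw [Function.update_of_ne (by omega : k - 1 ≠ n), Function.update_of_ne (by omega : k ≠ n)]

lemma wt_split_top {a n : ℤ} (h : a ≤ n - 1) (f : ℤ → E) :
    wt M π a n f = wt M π a (n - 1) f * M n (f (n - 1)) (f n) := by
  have := wt_update_top M π h f (f n)
  rwa [Function.update_eq_self] at this

lemma Icc_split_bot {a b : ℤ} (h : a ≤ b) :
    Finset.Icc a b = insert a (Finset.Icc (a + 1) b) := by
  ext k; simp only [Finset.mem_Icc, Finset.mem_insert]; omega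

lemma wt_update_bot {a b : ℤ} (h : a ≤ b) (f : ℤ → E) (x : E) :
    wt M π (a - 1) b (Function.update f (a - 1) x)
      = π (a - 1) x * (M a x (f a) * ∏ k ∈ Finset.Icc (a + 1) b, M k (f (k - 1)) (f k)) := by
  unfold wt
  rw [show a - 1 + 1 = a by ring, Icc_split_bot h,
    Finset.prod_insert (by simp [Finset.mem_Icc])]
  rw [Function.update_self, Function.update_of_ne (by omega : a ≠ a - 1)]
  congr 2
  exact Finset.prod_congr rfl fun k hk => by
    rw [Finset.mem_Icc] at hk
    rw [Function.update_of_ne (by omega : k - 1 ≠ a - 1),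
      Function.update_of_ne (by omega : k ≠ a - 1)]

/-- fill a pattern `q` on the interval `[m1, b]` into the function `f`. -/
noncomputable def patch (m1 b : ℤ) (f : ℤ → E) (q : {j // j ∈ Finset.Icc m1 b} → E) : ℤ → E :=
  fun j => if h : j ∈ Finset.Icc m1 b then q ⟨j, h⟩ else f j

lemma coordSigmaLE_le (n : ℤ) :
    coordSigmaLE E n ≤ (MeasurableSpace.pi : MeasurableSpace (ℤ → E)) := by
  refine iSup₂_le fun i _ => ?_
  exact Measurable.comap_le (measurable_pi_apply i)

section Main

variable {M : ℤ → E → E → ℝ} {π : ℤ → E → ℝ}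
variable (hM0 : ∀ n x x', 0 ≤ M n x x') (hM1 : ∀ n x, ∑ x', M n x x' = 1)
variable (hπ : IsAbsProbSeq M π)

include hM0 hM1 in
lemma M_le_one (n : ℤ) (z x : E) : M n z x ≤ 1 := by
  calc M n z x ≤ ∑ x', M n z x' :=
        Finset.single_le_sum (fun i _ => hM0 n z i) (Finset.mem_univ x)
    _ = 1 := hM1 n z

include hπ in
lemma pi_nonneg {n : ℤ} (hn : n ≤ 0) (x : E) : 0 ≤ π n x := (hπ n hn).1 x

include hπ in
lemma pi_le_one {n : ℤ} (hn : n ≤ 0) (x : E) : π n x ≤ 1 := by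
  calc π n x ≤ ∑ y, π n y :=
        Finset.single_le_sum (fun i _ => (hπ n hn).1 i) (Finset.mem_univ x)
    _ = 1 := (hπ n hn).2.1

include hM0 hπ in
lemma wt_nonneg {a : ℤ} (ha : a ≤ 0) (b : ℤ) (f : ℤ → E) : 0 ≤ wt M π a b f :=
  mul_nonneg (pi_nonneg hπ ha _) (Finset.prod_nonneg fun k _ => hM0 k _ _)

include hM0 hM1 hπ in
lemma wt_le_one {a : ℤ} (ha : a ≤ 0) (b : ℤ) (f : ℤ → E) : wt M π a b f ≤ 1 :=
  mul_le_one₀ (pi_le_one hπ ha _)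
    (Finset.prod_nonneg fun k _ => hM0 k _ _)
    (Finset.prod_le_one (fun k _ => hM0 k _ _) (fun k _ => M_le_one hM0 hM1 k _ _))

/-- A set whose outer measure plus that of its complement is at most the total mass is
null-measurable. -/
lemma nullMeasurable_of_add_compl_le {α : Type*} [MeasurableSpace α] (μ : Measure α)
    [IsFiniteMeasure μ] {s : Set α} (h : μ s + μ sᶜ ≤ μ Set.univ) :
    NullMeasurableSet s μ := by
  set t := toMeasurable μ s with ht
  set u := toMeasurable μ sᶜ with hu
  have hst : s ⊆ t := subset_toMeasurable μ s
  have hsu : sᶜ ⊆ u := subset_toMeasurable μ sᶜ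
  have htu : t ∪ u = Set.univ := by
    apply Set.univ_subset_iff.mp
    intro x _
    by_cases hx : x ∈ s
    · exact Or.inl (hst hx)
    · exact Or.inr (hsu hx)
  have hmt : MeasurableSet t := measurableSet_toMeasurable μ s
  have hmu : MeasurableSet u := measurableSet_toMeasurable μ sᶜ
  have hadd : μ (t ∪ u) + μ (t ∩ u) = μ t + μ u := measure_union_add_inter t hmu
  rw [htu, measure_toMeasurable, measure_toMeasurable] at hadd
  have h0 : μ (t ∩ u) = 0 := by
    have h1 : μ Set.univ + μ (t ∩ u) ≤ μ Set.univ + 0 := by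
      rw [hadd, add_zero]; exact h
    exact le_antisymm ((ENNReal.add_le_add_iff_left (measure_ne_top μ _)).mp h1) zero_le
  have hts : μ (t \ s) = 0 :=
    measure_mono_null (show t \ s ⊆ t ∩ u from fun x hx => Set.mem_inter hx.1 (hsu hx.2)) h0
  refine (hmt.nullMeasurableSet).congr ?_
  rw [MeasureTheory.ae_eq_set]
  have hst0 : μ (s \ t) = 0 := by
    have he : s \ t = ∅ := Set.diff_eq_empty.mpr hst
    simp [he]
  exact ⟨hts, hst0⟩

variable {P : Measure (ℤ → E)} [IsProbabilityMeasure P] (hPl : IsLawOf M π P)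

include hPl in
lemma cyl_measure_zero {a : ℤ} (ha : a ≤ 0) (f : ℤ → E) :
    P (cylSet a 0 f) = ENNReal.ofReal (wt M π a 0 f) := hPl a ha f

include hM0 hM1 hπ hPl in
lemma compl_bound : ∀ a : ℤ, a ≤ 0 → ∀ f : ℤ → E,
    P (cylSet a 0 f)ᶜ ≤ ENNReal.ofReal (1 - wt M π a 0 f) := by
  classical
  refine fun a ha => Int.le_induction_down
    (motive := fun b _ => ∀ f : ℤ → E, P (cylSet b 0 f)ᶜ ≤ ENNReal.ofReal (1 - wt M π b 0 f)) ?_ ?_ a ha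
  · intro f
    have hsub : (cylSet (0:ℤ) 0 f)ᶜ ⊆
        ⋃ x ∈ Finset.univ.erase (f 0), cylSet 0 0 (Function.update f 0 x) := by
      intro ω hω
      simp only [cylSet, Set.mem_compl_iff, Set.mem_setOf_eq, not_forall] at hω
      obtain ⟨m, hm1, hm2, hne⟩ := hω
      have hm : m = 0 := le_antisymm hm2 hm1
      subst hm
      refine Set.mem_biUnion (Finset.mem_erase.mpr ⟨hne, Finset.mem_univ _⟩) ?_
      intro j hj1 hj2
      have hj : j = (0:ℤ) := le_antisymm hj2 hj1
      subst hj
      rw [Function.update_self]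
    calc P (cylSet (0:ℤ) 0 f)ᶜ
        ≤ ∑ x ∈ Finset.univ.erase (f 0), P (cylSet 0 0 (Function.update f 0 x)) :=
          le_trans (measure_mono hsub) (measure_biUnion_finset_le _ _)
      _ = ∑ x ∈ Finset.univ.erase (f 0), ENNReal.ofReal (π 0 x) := by
          refine Finset.sum_congr rfl fun x _ => ?_
          rw [cyl_measure_zero hPl le_rfl, wt_single, Function.update_self]
      _ = ENNReal.ofReal (∑ x ∈ Finset.univ.erase (f 0), π 0 x) :=
          (ENNReal.ofReal_sum_of_nonneg fun x _ => pi_nonneg hπ le_rfl x).symm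
      _ = ENNReal.ofReal (1 - wt M π 0 0 f) := by
          rw [Finset.sum_erase_eq_sub (Finset.mem_univ _), (hπ 0 le_rfl).2.1, wt_single]
  · intro n hn IH f
    have hsub : (cylSet (n-1) 0 f)ᶜ ⊆ (cylSet n 0 f)ᶜ ∪
        ⋃ x ∈ Finset.univ.erase (f (n-1)), cylSet (n-1) 0 (Function.update f (n-1) x) := by
      intro ω hω
      simp only [cylSet, Set.mem_compl_iff, Set.mem_setOf_eq, not_forall] at hω
      obtain ⟨m, hm1, hm2, hne⟩ := hω
      by_cases hc : ω ∈ cylSet n 0 f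
      · right
        have hmn : m = n - 1 := by
          by_contra hmn
          exact hne (hc m (by omega) hm2)
        subst hmn
        refine Set.mem_biUnion (Finset.mem_erase.mpr ⟨hne, Finset.mem_univ _⟩) ?_
        intro j hj1 hj2
        rcases eq_or_lt_of_le hj1 with hj | hj
        · rw [← hj, Function.update_self]
        · rw [Function.update_of_ne (by omega : j ≠ n - 1)]
          exact hc j (by omega) hj2
      · exact Or.inl hc
    set R := ∏ k ∈ Finset.Icc (n + 1) 0, M k (f (k - 1)) (f k) with hRdef
    have hR : 0 ≤ R := Finset.prod_nonneg fun k _ => hM0 k _ _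
    have hwt : ∀ x : E, wt M π (n-1) 0 (Function.update f (n-1) x)
        = π (n-1) x * (M n x (f n) * R) := fun x => wt_update_bot M π hn f x
    have hterm : ∀ x : E, 0 ≤ π (n-1) x * (M n x (f n) * R) :=
      fun x => mul_nonneg (pi_nonneg hπ (by omega) x) (mul_nonneg (hM0 n x _) hR)
    have hfwt : wt M π (n-1) 0 f = π (n-1) (f (n-1)) * (M n (f (n-1)) (f n) * R) := by
      have := hwt (f (n-1)); rwa [Function.update_eq_self] at this
    have hnwt : wt M π n 0 f = π n (f n) * R := rfl
    have hsum : ∑ x ∈ Finset.univ.erase (f (n-1)), wt M π (n-1) 0 (Function.update f (n-1) x)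
        = wt M π n 0 f - wt M π (n-1) 0 f := by
      rw [Finset.sum_congr rfl fun x _ => hwt x, Finset.sum_erase_eq_sub (Finset.mem_univ _),
        hfwt, hnwt]
      congr 1
      have hassoc : ∀ x : E, π (n-1) x * (M n x (f n) * R) = (π (n-1) x * M n x (f n)) * R :=
        fun x => (mul_assoc _ _ _).symm
      rw [Finset.sum_congr rfl fun x _ => hassoc x, ← Finset.sum_mul, (hπ n hn).2.2 (f n)]
    have hsumnn : 0 ≤ wt M π n 0 f - wt M π (n-1) 0 f := by
      rw [← hsum]
      exact Finset.sum_nonneg fun x _ => by rw [hwt x]; exact hterm x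
    calc P (cylSet (n-1) 0 f)ᶜ
        ≤ P (cylSet n 0 f)ᶜ +
            P (⋃ x ∈ Finset.univ.erase (f (n-1)), cylSet (n-1) 0 (Function.update f (n-1) x)) :=
          le_trans (measure_mono hsub) (measure_union_le _ _)
      _ ≤ ENNReal.ofReal (1 - wt M π n 0 f) +
            ∑ x ∈ Finset.univ.erase (f (n-1)), P (cylSet (n-1) 0 (Function.update f (n-1) x)) :=
          add_le_add (IH f) (measure_biUnion_finset_le _ _)
      _ = ENNReal.ofReal (1 - wt M π n 0 f) +
            ENNReal.ofReal (wt M π n 0 f - wt M π (n-1) 0 f) := by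
          congr 1
          rw [← hsum, ENNReal.ofReal_sum_of_nonneg (fun x _ => by rw [hwt x]; exact hterm x)]
          refine Finset.sum_congr rfl fun x _ => ?_
          rw [cyl_measure_zero hPl (by omega)]
      _ = ENNReal.ofReal (1 - wt M π (n-1) 0 f) := by
          rw [← ENNReal.ofReal_add (by linarith [wt_le_one hM0 hM1 hπ hn 0 f]) hsumnn]
          ring_nf

include hM0 hM1 hπ hPl in
lemma cyl_spec : ∀ b : ℤ, b ≤ 0 → ∀ a : ℤ, a ≤ b → ∀ f : ℤ → E,
    P (cylSet a b f) = ENNReal.ofReal (wt M π a b f) ∧ NullMeasurableSet (cylSet a b f) P := by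
  classical
  refine fun b hb => Int.le_induction_down
    (motive := fun b _ => ∀ a : ℤ, a ≤ b → ∀ f : ℤ → E,
      P (cylSet a b f) = ENNReal.ofReal (wt M π a b f) ∧ NullMeasurableSet (cylSet a b f) P)
    ?_ ?_ b hb
  · intro a ha f
    refine ⟨cyl_measure_zero hPl ha f, ?_⟩
    apply nullMeasurable_of_add_compl_le
    rw [cyl_measure_zero hPl ha f, measure_univ]
    calc ENNReal.ofReal (wt M π a 0 f) + P (cylSet a 0 f)ᶜ
        ≤ ENNReal.ofReal (wt M π a 0 f) + ENNReal.ofReal (1 - wt M π a 0 f) :=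
          add_le_add_right (compl_bound hM0 hM1 hπ hPl a ha f) _
      _ = ENNReal.ofReal 1 := by
          rw [← ENNReal.ofReal_add (wt_nonneg hM0 hπ ha 0 f)
            (by linarith [wt_le_one hM0 hM1 hπ ha 0 f])]
          ring_nf
      _ ≤ 1 := by simp
  · intro n hn IH a ha f
    have ha0 : a ≤ 0 := by omega
    have hU : cylSet a (n-1) f = ⋃ x : E, cylSet a n (Function.update f n x) := by
      ext ω
      constructor
      · intro hω
        refine Set.mem_iUnion.mpr ⟨ω n, fun m h1 h2 => ?_⟩
        rcases eq_or_lt_of_le h2 with h | h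
        · rw [h, Function.update_self]
        · rw [Function.update_of_ne (by omega : m ≠ n)]
          exact hω m h1 (by omega)
      · intro hω
        obtain ⟨x, hx⟩ := Set.mem_iUnion.mp hω
        intro m h1 h2
        have := hx m h1 (by omega)
        rwa [Function.update_of_ne (by omega : m ≠ n)] at this
    have hdisj : Pairwise (Function.onFun Disjoint
        fun x : E => cylSet a n (Function.update f n x)) := by
      intro x y hxy
      refine Set.disjoint_left.mpr fun ω hx hy => hxy ?_
      have h1 := hx n (by omega) le_rfl
      have h2 := hy n (by omega) le_rfl
      rw [Function.update_self] at h1 h2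
      rw [← h1, ← h2]
    have hnm : ∀ x : E, NullMeasurableSet (cylSet a n (Function.update f n x)) P :=
      fun x => (IH a (by omega) _).2
    constructor
    · rw [hU, measure_iUnion₀ (fun x y hxy => (hdisj hxy).aedisjoint) hnm, tsum_fintype]
      have hval : ∀ x : E, P (cylSet a n (Function.update f n x))
          = ENNReal.ofReal (wt M π a (n-1) f * M n (f (n-1)) x) := fun x => by
        rw [(IH a (by omega) _).1, wt_update_top M π ha]
      rw [Finset.sum_congr rfl fun x _ => hval x,
        ← ENNReal.ofReal_sum_of_nonneg
          (fun x _ => mul_nonneg (wt_nonneg hM0 hπ ha0 _ f) (hM0 n _ x)),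
        ← Finset.mul_sum, hM1 n (f (n-1)), mul_one]
    · rw [hU]
      exact NullMeasurableSet.iUnion hnm

include hM0 hM1 hπ hPl in
lemma cyl_step {n a : ℤ} (hn : n ≤ 0) (ha : a ≤ n - 1) (f : ℤ → E) (x : E) :
    P (cylSet a (n-1) f ∩ {ω : ℤ → E | ω n = x})
      = P (cylSet a (n-1) f) * ENNReal.ofReal (M n (f (n-1)) x) := by
  have hset : cylSet a (n-1) f ∩ {ω : ℤ → E | ω n = x}
      = cylSet a n (Function.update f n x) := by
    ext ω
    constructor
    · rintro ⟨h1, h2⟩ m hm1 hm2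
      rcases eq_or_lt_of_le hm2 with h | h
      · subst h; rw [Function.update_self]; exact h2
      · rw [Function.update_of_ne (by omega : m ≠ n)]
        exact h1 m hm1 (by omega)
    · intro hω
      refine ⟨fun m hm1 hm2 => ?_, ?_⟩
      · have := hω m hm1 (by omega)
        rwa [Function.update_of_ne (by omega : m ≠ n)] at this
      · have := hω n (by omega) le_rfl
        rwa [Function.update_self] at this
  rw [hset, (cyl_spec hM0 hM1 hπ hPl n hn a (by omega) _).1,
    (cyl_spec hM0 hM1 hπ hPl (n-1) (by omega) a ha f).1,
    wt_update_top M π ha, ENNReal.ofReal_mul (wt_nonneg hM0 hπ (by omega) _ f)]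

include hM0 hM1 hπ hPl in
lemma key_decomp {m1 b : ℤ} (hm1 : m1 ≤ b) (hb : b ≤ 0) (f : ℤ → E)
    (Φ : (ℤ → E) → Prop)
    (hΦ : ∀ ω ω' : ℤ → E, (∀ j, m1 ≤ j → j ≤ b → ω j = ω' j) → Φ ω → Φ ω')
    (S : Set (ℤ → E)) (hS : NullMeasurableSet S P)
    [DecidablePred fun q : {j // j ∈ Finset.Icc m1 b} → E => Φ (patch m1 b f q)] :
    P ({ω | Φ ω} ∩ S) =
      ∑ q ∈ Finset.univ.filter
          (fun q : {j // j ∈ Finset.Icc m1 b} → E => Φ (patch m1 b f q)),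
        P (cylSet m1 b (patch m1 b f q) ∩ S) := by
  have hpatch_agree : ∀ (ω : ℤ → E) (j : ℤ), m1 ≤ j → j ≤ b →
      patch m1 b f (fun i => ω ↑i) j = ω j := by
    intro ω j h1 h2
    rw [patch, dif_pos (Finset.mem_Icc.mpr ⟨h1, h2⟩)]
  have hunion : {ω | Φ ω} ∩ S =
      ⋃ q ∈ Finset.univ.filter
          (fun q : {j // j ∈ Finset.Icc m1 b} → E => Φ (patch m1 b f q)),
        (cylSet m1 b (patch m1 b f q) ∩ S) := by
    ext ω
    constructor
    · rintro ⟨hT, hS'⟩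
      refine Set.mem_biUnion (Finset.mem_filter.mpr ⟨Finset.mem_univ _,
        hΦ ω _ (fun j h1 h2 => (hpatch_agree ω j h1 h2).symm) hT⟩) ⟨?_, hS'⟩
      exact fun m h1 h2 => (hpatch_agree ω m h1 h2).symm
    · intro hω
      simp only [Set.mem_iUnion] at hω
      obtain ⟨q, hq, hc, hS'⟩ := hω
      exact ⟨hΦ (patch m1 b f q) ω (fun j h1 h2 => (hc j h1 h2).symm)
        (Finset.mem_filter.mp hq).2, hS'⟩
  rw [hunion, measure_biUnion_finset₀]
  · intro q _ q' _ hne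
    apply Disjoint.aedisjoint
    have hj : ∃ j : {j // j ∈ Finset.Icc m1 b}, q j ≠ q' j := by
      by_contra h
      push_neg at h
      exact hne (funext h)
    obtain ⟨j, hj⟩ := hj
    refine Set.disjoint_left.mpr fun ω hx hy => hj ?_
    have hjm := Finset.mem_Icc.mp j.2
    have h1 := hx.1 ↑j hjm.1 hjm.2
    have h2 := hy.1 ↑j hjm.1 hjm.2
    rw [patch, dif_pos j.2] at h1 h2
    rw [← h1, ← h2]
  · exact fun q _ => ((cyl_spec hM0 hM1 hπ hPl b hb m1 hm1 _).2).inter hS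

open scoped Classical in
include hM0 hM1 hπ hPl in
lemma engine {n a : ℤ} (hn : n ≤ 0) (ha : a ≤ n - 1) (f : ℤ → E) (x : E)
    {B : Set (ℤ → E)} (hB : MeasurableSet[coordSigmaLE E (a-1)] B) :
    P (B ∩ cylSet a (n-1) f ∩ {ω : ℤ → E | ω n = x})
      = P (B ∩ cylSet a (n-1) f) * ENNReal.ofReal (M n (f (n-1)) x) := by
  have hle : coordSigmaLE E (a-1) ≤ (MeasurableSpace.pi : MeasurableSpace (ℤ → E)) :=
    coordSigmaLE_le _
  set c := ENNReal.ofReal (M n (f (n-1)) x) with hc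
  have hcne : c ≠ ⊤ := ENNReal.ofReal_ne_top
  set S0 := cylSet a (n-1) f with hS0
  set S1 := cylSet a (n-1) f ∩ {ω : ℤ → E | ω n = x} with hS1
  have hxnm : NullMeasurableSet {ω : ℤ → E | ω n = x} P := by
    have := (cyl_spec hM0 hM1 hπ hPl n hn n le_rfl (fun _ => x)).2
    rwa [cyl_single] at this
  -- the two (trimmed) measures
  set μ1 : @Measure (ℤ → E) (coordSigmaLE E (a-1)) := (P.restrict S1).trim hle with hμ1
  set μ2 : @Measure (ℤ → E) (coordSigmaLE E (a-1)) := (c • P.restrict S0).trim hle with hμ2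
  haveI : IsFiniteMeasure (c • P.restrict S0) := by
    constructor
    rw [Measure.smul_apply, smul_eq_mul]
    exact ENNReal.mul_lt_top ENNReal.ofReal_lt_top (measure_lt_top _ _)
  haveI : IsFiniteMeasure μ1 := MeasureTheory.isFiniteMeasure_trim hle
  haveI : IsFiniteMeasure μ2 := MeasureTheory.isFiniteMeasure_trim hle
  -- the generating π-system
  set C : Set (Set (ℤ → E)) := piiUnionInter
      (fun i => {s | @MeasurableSet _ (MeasurableSpace.comap (fun ω : ℤ → E => ω i) inferInstance) s})
      (Set.Iic (a-1)) with hC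
  have hgen : (coordSigmaLE E (a-1)) = MeasurableSpace.generateFrom C :=
    (generateFrom_piiUnionInter_measurableSet _ _).symm
  have hpi : IsPiSystem C :=
    isPiSystem_piiUnionInter _ (fun i => @isPiSystem_measurableSet (ℤ → E)
      (MeasurableSpace.comap (fun ω : ℤ → E => ω i) inferInstance)) _
  -- key computation for an arbitrary rectangle
  have hrect : ∀ t : Set (ℤ → E), t ∈ C → P (t ∩ S1) = P (t ∩ S0) * c := by
    rintro t ⟨F, hFS, g, hg, rfl⟩
    set m1 : ℤ := (insert a F).min' (Finset.insert_nonempty _ _) with hm1def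
    have hm1a : m1 ≤ a := Finset.min'_le _ _ (Finset.mem_insert_self a F)
    have hm1F : ∀ i ∈ F, m1 ≤ i := fun i hi => Finset.min'_le _ _ (Finset.mem_insert_of_mem hi)
    have hFle : ∀ i ∈ F, i ≤ a - 1 := fun i hi => hFS hi
    set Φ : (ℤ → E) → Prop :=
      fun ω => (∀ i ∈ F, ω ∈ g i) ∧ ∀ m, a ≤ m → m ≤ n-1 → ω m = f m with hΦdef
    have hTset : {ω | Φ ω} = (⋂ i ∈ F, g i) ∩ S0 := by
      ext ω
      simp only [hΦdef, Set.mem_setOf_eq, Set.mem_inter_iff, Set.mem_iInter]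
      exact Iff.rfl
    have hΦdet : ∀ ω ω' : ℤ → E, (∀ j, m1 ≤ j → j ≤ n-1 → ω j = ω' j) → Φ ω → Φ ω' := by
      intro ω ω' hagree hΦω
      constructor
      · intro i hi
        obtain ⟨Bi, _, hBieq⟩ := MeasurableSpace.measurableSet_comap.mp (hg i hi)
        have h1 : ω ∈ g i := hΦω.1 i hi
        rw [← hBieq] at h1 ⊢
        have : ω i = ω' i := hagree i (hm1F i hi) (by have := hFle i hi; omega)
        simpa [Set.mem_preimage, ← this] using h1
      · intro m h1' h2'
        rw [← hagree m (le_trans hm1a h1') h2']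
        exact hΦω.2 m h1' h2'
    have hm1n : m1 ≤ n - 1 := le_trans hm1a ha
    have hpq : ∀ q : {j // j ∈ Finset.Icc m1 (n-1)} → E,
        Φ (patch m1 (n-1) f q) → patch m1 (n-1) f q (n-1) = f (n-1) :=
      fun q hq => hq.2 (n-1) ha le_rfl
    calc P ((⋂ i ∈ F, g i) ∩ S1)
        = P ({ω | Φ ω} ∩ {ω : ℤ → E | ω n = x}) := by
          rw [hTset, hS1, ← Set.inter_assoc]
      _ = ∑ q ∈ Finset.univ.filter
            (fun q : {j // j ∈ Finset.Icc m1 (n-1)} → E => Φ (patch m1 (n-1) f q)),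
          P (cylSet m1 (n-1) (patch m1 (n-1) f q) ∩ {ω : ℤ → E | ω n = x}) :=
          key_decomp hM0 hM1 hπ hPl hm1n (by omega) f Φ hΦdet _ hxnm
      _ = ∑ q ∈ Finset.univ.filter
            (fun q : {j // j ∈ Finset.Icc m1 (n-1)} → E => Φ (patch m1 (n-1) f q)),
          P (cylSet m1 (n-1) (patch m1 (n-1) f q)) * c := by
          refine Finset.sum_congr rfl fun q hq => ?_
          rw [cyl_step hM0 hM1 hπ hPl hn hm1n _ x, hpq q (Finset.mem_filter.mp hq).2]
      _ = (∑ q ∈ Finset.univ.filter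
            (fun q : {j // j ∈ Finset.Icc m1 (n-1)} → E => Φ (patch m1 (n-1) f q)),
          P (cylSet m1 (n-1) (patch m1 (n-1) f q) ∩ Set.univ)) * c := by
          rw [Finset.sum_mul]
          refine Finset.sum_congr rfl fun q _ => ?_
          rw [Set.inter_univ]
      _ = P ({ω | Φ ω} ∩ Set.univ) * c := by
          rw [← key_decomp hM0 hM1 hπ hPl hm1n (by omega) f Φ hΦdet Set.univ
            MeasurableSet.univ.nullMeasurableSet]
      _ = P ((⋂ i ∈ F, g i) ∩ S0) * c := by rw [Set.inter_univ, hTset]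
  -- ambient measurability of rectangles
  have hambient : ∀ t : Set (ℤ → E), t ∈ C → MeasurableSet t := by
    rintro t ht
    have : MeasurableSet[MeasurableSpace.generateFrom C] t :=
      MeasurableSpace.measurableSet_generateFrom ht
    rw [← hgen] at this
    exact hle _ this
  have hsub : ∀ t : Set (ℤ → E), t ∈ C → MeasurableSet[coordSigmaLE E (a-1)] t := by
    intro t ht
    rw [hgen]
    exact MeasurableSpace.measurableSet_generateFrom ht
  have hagree : ∀ t ∈ C, μ1 t = μ2 t := by
    intro t ht
    rw [hμ1, hμ2, trim_measurableSet_eq hle (hsub t ht), trim_measurableSet_eq hle (hsub t ht),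
      Measure.smul_apply, Measure.restrict_apply (hambient t ht),
      Measure.restrict_apply (hambient t ht), smul_eq_mul, hrect t ht, mul_comm]
  have huniv : μ1 Set.univ = μ2 Set.univ := by
    rw [hμ1, hμ2, trim_measurableSet_eq hle MeasurableSet.univ,
      trim_measurableSet_eq hle MeasurableSet.univ,
      Measure.smul_apply, Measure.restrict_apply MeasurableSet.univ,
      Measure.restrict_apply MeasurableSet.univ, smul_eq_mul, Set.univ_inter, Set.univ_inter,
      hS1, cyl_step hM0 hM1 hπ hPl hn ha f x, mul_comm]
  have hμeq : μ1 = μ2 :=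
    MeasureTheory.ext_of_generate_finite (m0 := coordSigmaLE E (a-1)) (μ := μ1) (ν := μ2)
      C hgen hpi hagree huniv
  have hBamb : MeasurableSet B := hle _ hB
  have h1 : μ1 B = P (B ∩ S1) := by
    rw [hμ1, trim_measurableSet_eq hle hB, Measure.restrict_apply hBamb]
  have h2 : μ2 B = P (B ∩ S0) * c := by
    rw [hμ2, trim_measurableSet_eq hle hB, Measure.smul_apply,
      Measure.restrict_apply hBamb, smul_eq_mul, mul_comm]
  rw [Set.inter_assoc, ← h1, hμeq, h2]

include hM0 hM1 hπ hPl in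
lemma coord_nm {n : ℤ} (hn : n ≤ 0) (x : E) :
    NullMeasurableSet {ω : ℤ → E | ω n = x} P := by
  have := (cyl_spec hM0 hM1 hπ hPl n hn n le_rfl (fun _ => x)).2
  rwa [cyl_single] at this

include hM0 hM1 hπ hPl in
lemma partition_sum {B : Set (ℤ → E)} (hB : MeasurableSet B) {m : ℤ} (hm : m ≤ 0) :
    P B = ∑ z : E, P (B ∩ {ω : ℤ → E | ω m = z}) := by
  have hU : B = ⋃ z : E, B ∩ {ω : ℤ → E | ω m = z} := by
    ext ω
    constructor
    · intro h
      exact Set.mem_iUnion.mpr ⟨ω m, h, rfl⟩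
    · intro h
      obtain ⟨z, hz⟩ := Set.mem_iUnion.mp h
      exact hz.1
  calc P B = P (⋃ z : E, B ∩ {ω : ℤ → E | ω m = z}) := by rw [← hU]
    _ = ∑' z : E, P (B ∩ {ω : ℤ → E | ω m = z}) := by
        refine measure_iUnion₀ ?_ ?_
        · intro z z' hzz
          refine Disjoint.aedisjoint (Set.disjoint_left.mpr fun ω h1 h2 => hzz ?_)
          rw [← h1.2, ← h2.2]
        · exact fun z => hB.nullMeasurableSet.inter (coord_nm hM0 hM1 hπ hPl hm z)
    _ = ∑ z : E, P (B ∩ {ω : ℤ → E | ω m = z}) := tsum_fintype _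

include hM0 hM1 hπ hPl in
lemma chain_formula {a : ℤ} {A : Set (ℤ → E)}
    (hA : ∀ m : ℤ, MeasurableSet[coordSigmaLE E m] A) :
    ∀ b : ℤ, a ≤ b → b ≤ 0 → ∀ f : ℤ → E,
      P (A ∩ cylSet a b f) = P (A ∩ {ω : ℤ → E | ω a = f a})
        * ENNReal.ofReal (∏ k ∈ Finset.Icc (a+1) b, M k (f (k-1)) (f k)) := by
  refine fun b hab => Int.le_induction
    (motive := fun b _ => b ≤ 0 → ∀ f : ℤ → E,
      P (A ∩ cylSet a b f) = P (A ∩ {ω : ℤ → E | ω a = f a})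
        * ENNReal.ofReal (∏ k ∈ Finset.Icc (a+1) b, M k (f (k-1)) (f k))) ?_ ?_ b hab
  · intro _ f
    rw [cyl_single, Finset.Icc_eq_empty (by omega : ¬ a + 1 ≤ a), Finset.prod_empty,
      ENNReal.ofReal_one, mul_one]
  · intro b hb IH hb1 f
    have hb0 : b ≤ 0 := by omega
    have hset : cylSet a (b+1) f = cylSet a b f ∩ {ω : ℤ → E | ω (b+1) = f (b+1)} := by
      ext ω
      constructor
      · intro hω
        exact ⟨fun m h1 h2 => hω m h1 (by omega), hω (b+1) (by omega) le_rfl⟩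
      · rintro ⟨h1, h2⟩ m hm1 hm2
        rcases eq_or_lt_of_le hm2 with h | h
        · subst h; exact h2
        · exact h1 m hm1 (by omega)
    have heng := engine hM0 hM1 hπ hPl (n := b+1) (a := a) (by omega) (by omega) f (f (b+1))
      (hA (a-1))
    rw [show b + 1 - 1 = b by ring] at heng
    rw [hset, ← Set.inter_assoc, heng, IH hb0 f]
    have hprod : ∏ k ∈ Finset.Icc (a+1) (b+1), M k (f (k-1)) (f k)
        = (∏ k ∈ Finset.Icc (a+1) b, M k (f (k-1)) (f k)) * M (b+1) (f b) (f (b+1)) := by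
      rw [Icc_split_top (by omega : a + 1 ≤ b + 1), Finset.prod_insert (by simp [Finset.mem_Icc])]
      rw [show b + 1 - 1 = b by ring, mul_comm]
    rw [hprod, ENNReal.ofReal_mul (Finset.prod_nonneg fun k _ => hM0 k _ _), mul_assoc]

open scoped Classical in
include hM0 hM1 hπ hPl in
lemma indep_of_marginals {A : Set (ℤ → E)}
    (hA : ∀ m : ℤ, MeasurableSet[coordSigmaLE E m] A)
    (hInd : ∀ n : ℤ, n ≤ 0 → ∀ x : E,
      P (A ∩ {ω : ℤ → E | ω n = x}) = P A * ENNReal.ofReal (π n x)) :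
    P A = P A * P A := by
  have hle : coordSigmaLE E (-1) ≤ (MeasurableSpace.pi : MeasurableSpace (ℤ → E)) :=
    coordSigmaLE_le _
  have hAamb : MeasurableSet A := hle _ (hA (-1))
  have hAnm : NullMeasurableSet A P := hAamb.nullMeasurableSet
  have hAcyl : ∀ a : ℤ, a ≤ 0 → ∀ f : ℤ → E,
      P (A ∩ cylSet a 0 f) = P A * P (cylSet a 0 f) := by
    intro a ha f
    rw [chain_formula hM0 hM1 hπ hPl hA 0 ha le_rfl f, hInd a ha (f a),
      (cyl_spec hM0 hM1 hπ hPl 0 le_rfl a ha f).1, mul_assoc,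
      ← ENNReal.ofReal_mul (pi_nonneg hπ ha _)]
    rfl
  set μ1 : @Measure (ℤ → E) (coordSigmaLE E (-1)) := (P.restrict A).trim hle with hμ1
  set μ2 : @Measure (ℤ → E) (coordSigmaLE E (-1)) := ((P A) • P).trim hle with hμ2
  haveI : IsFiniteMeasure ((P A) • P) := by
    constructor
    rw [Measure.smul_apply, smul_eq_mul]
    exact ENNReal.mul_lt_top (measure_lt_top _ _) (measure_lt_top _ _)
  haveI : IsFiniteMeasure μ1 := MeasureTheory.isFiniteMeasure_trim hle
  haveI : IsFiniteMeasure μ2 := MeasureTheory.isFiniteMeasure_trim hle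
  set C : Set (Set (ℤ → E)) := piiUnionInter
      (fun i => {s | @MeasurableSet _ (MeasurableSpace.comap (fun ω : ℤ → E => ω i) inferInstance) s})
      (Set.Iic (-1)) with hC
  have hgen : (coordSigmaLE E (-1)) = MeasurableSpace.generateFrom C :=
    (generateFrom_piiUnionInter_measurableSet _ _).symm
  have hpi : IsPiSystem C :=
    isPiSystem_piiUnionInter _ (fun i => @isPiSystem_measurableSet (ℤ → E)
      (MeasurableSpace.comap (fun ω : ℤ → E => ω i) inferInstance)) _
  have hrect : ∀ t : Set (ℤ → E), t ∈ C → P (t ∩ A) = P A * P t := by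
    rintro t ⟨F, hFS, g, hg, rfl⟩
    set m1 : ℤ := (insert (-1 : ℤ) F).min' (Finset.insert_nonempty _ _) with hm1def
    have hm10 : m1 ≤ 0 := by
      have := Finset.min'_le (insert (-1:ℤ) F) (-1) (Finset.mem_insert_self _ F)
      omega
    have hm1F : ∀ i ∈ F, m1 ≤ i := fun i hi => Finset.min'_le _ _ (Finset.mem_insert_of_mem hi)
    have hFle : ∀ i ∈ F, i ≤ -1 := fun i hi => hFS hi
    set f0 : ℤ → E := fun _ => Classical.arbitrary E with hf0
    set Φ : (ℤ → E) → Prop := fun ω => ∀ i ∈ F, ω ∈ g i with hΦdef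
    have hTset : {ω | Φ ω} = ⋂ i ∈ F, g i := by
      ext ω
      simp only [hΦdef, Set.mem_setOf_eq, Set.mem_iInter]
    have hΦdet : ∀ ω ω' : ℤ → E, (∀ j, m1 ≤ j → j ≤ 0 → ω j = ω' j) → Φ ω → Φ ω' := by
      intro ω ω' hagree hΦω i hi
      obtain ⟨Bi, _, hBieq⟩ := MeasurableSpace.measurableSet_comap.mp (hg i hi)
      have h1 : ω ∈ g i := hΦω i hi
      rw [← hBieq] at h1 ⊢
      have heq : ω i = ω' i := hagree i (hm1F i hi) (by have := hFle i hi; omega)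
      simpa [Set.mem_preimage, ← heq] using h1
    calc P ((⋂ i ∈ F, g i) ∩ A)
        = P ({ω | Φ ω} ∩ A) := by rw [hTset]
      _ = ∑ q ∈ Finset.univ.filter
            (fun q : {j // j ∈ Finset.Icc m1 0} → E => Φ (patch m1 0 f0 q)),
          P (cylSet m1 0 (patch m1 0 f0 q) ∩ A) :=
          key_decomp hM0 hM1 hπ hPl hm10 le_rfl f0 Φ hΦdet A hAnm
      _ = ∑ q ∈ Finset.univ.filter
            (fun q : {j // j ∈ Finset.Icc m1 0} → E => Φ (patch m1 0 f0 q)),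
          P A * P (cylSet m1 0 (patch m1 0 f0 q) ∩ Set.univ) := by
          refine Finset.sum_congr rfl fun q _ => ?_
          rw [Set.inter_univ, Set.inter_comm, hAcyl m1 hm10 _]
      _ = P A * P ({ω | Φ ω} ∩ Set.univ) := by
          rw [← Finset.mul_sum, ← key_decomp hM0 hM1 hπ hPl hm10 le_rfl f0 Φ hΦdet Set.univ
            MeasurableSet.univ.nullMeasurableSet]
      _ = P A * P (⋂ i ∈ F, g i) := by rw [Set.inter_univ, hTset]
  have hambient : ∀ t : Set (ℤ → E), t ∈ C → MeasurableSet t := by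
    intro t ht
    have h2 : MeasurableSet[MeasurableSpace.generateFrom C] t :=
      MeasurableSpace.measurableSet_generateFrom ht
    rw [← hgen] at h2
    exact hle _ h2
  have hsubm : ∀ t : Set (ℤ → E), t ∈ C → MeasurableSet[coordSigmaLE E (-1)] t := by
    intro t ht
    rw [hgen]
    exact MeasurableSpace.measurableSet_generateFrom ht
  have hagree : ∀ t ∈ C, μ1 t = μ2 t := by
    intro t ht
    rw [hμ1, hμ2, trim_measurableSet_eq hle (hsubm t ht), trim_measurableSet_eq hle (hsubm t ht),
      Measure.smul_apply, Measure.restrict_apply (hambient t ht), smul_eq_mul, hrect t ht]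
  have huniv : μ1 Set.univ = μ2 Set.univ := by
    rw [hμ1, hμ2, trim_measurableSet_eq hle MeasurableSet.univ,
      trim_measurableSet_eq hle MeasurableSet.univ, Measure.smul_apply,
      Measure.restrict_apply MeasurableSet.univ, smul_eq_mul, Set.univ_inter, measure_univ,
      mul_one]
  have hμeq : μ1 = μ2 :=
    MeasureTheory.ext_of_generate_finite (m0 := coordSigmaLE E (-1)) (μ := μ1) (ν := μ2)
      C hgen hpi hagree huniv
  have h1 : μ1 A = P A := by
    rw [hμ1, trim_measurableSet_eq hle (hA (-1)), Measure.restrict_apply hAamb, Set.inter_self]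
  have h2 : μ2 A = P A * P A := by
    rw [hμ2, trim_measurableSet_eq hle (hA (-1)), Measure.smul_apply, smul_eq_mul]
  calc P A = μ1 A := h1.symm
    _ = μ2 A := by rw [hμeq]
    _ = P A * P A := h2

end Main

end TailAux

open TailAux

/-- A nontrivial tail event for `P_π` yields a second, distinct sequence of
absolute probabilities. -/
theorem nontrivial_tail_implies_two_absolute_probabilities {E : Type*} [Fintype E]
    [Nonempty E] [MeasurableSpace E]
    (M : ℤ → E → E → ℝ) (hM0 : ∀ n x x', 0 ≤ M n x x') (hM1 : ∀ n x, ∑ x', M n x x' = 1)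
    (π : ℤ → E → ℝ) (hπ : IsAbsProbSeq M π)
    (P : Measure (ℤ → E)) [IsProbabilityMeasure P] (hP : IsLawOf M π P)
    (A : Set (ℤ → E)) (hA : MeasurableSet[tailSigma E] A)
    (hA0 : 0 < P A) (hA1 : P A < 1) :
    ∃ π' : ℤ → E → ℝ, IsAbsProbSeq M π' ∧ ∃ n ≤ (0 : ℤ), π' n ≠ π n := by
  classical
  have hAm : ∀ m : ℤ, MeasurableSet[coordSigmaLE E m] A := by
    intro m
    exact (iInf_le (fun n : ℤ => coordSigmaLE E n) m) _ hA
  have hAamb : MeasurableSet A := (coordSigmaLE_le 0) _ (hAm 0)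
  have hPA0 : P A ≠ 0 := hA0.ne'
  have hPAtop : P A ≠ ⊤ := measure_ne_top P A
  have hPAr : (P A).toReal ≠ 0 := ENNReal.toReal_ne_zero.mpr ⟨hPA0, hPAtop⟩
  -- marginal sums
  have hsum : ∀ n : ℤ, n ≤ 0 → ∑ x : E, P (A ∩ {ω : ℤ → E | ω n = x}) = P A :=
    fun n hn => (partition_sum hM0 hM1 hπ hP hAamb hn).symm
  -- kernel identity in ENNReal
  have hker : ∀ n : ℤ, n ≤ 0 → ∀ x : E,
      P (A ∩ {ω : ℤ → E | ω n = x})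
        = ∑ z : E, P (A ∩ {ω : ℤ → E | ω (n-1) = z}) * ENNReal.ofReal (M n z x) := by
    intro n hn x
    have hU : A ∩ {ω : ℤ → E | ω n = x}
        = ⋃ z : E, A ∩ {ω : ℤ → E | ω (n-1) = z} ∩ {ω : ℤ → E | ω n = x} := by
      ext ω
      constructor
      · rintro ⟨h1, h2⟩
        exact Set.mem_iUnion.mpr ⟨ω (n-1), ⟨h1, rfl⟩, h2⟩
      · intro hω
        obtain ⟨z, hz⟩ := Set.mem_iUnion.mp hω
        exact ⟨hz.1.1, hz.2⟩
    rw [hU, measure_iUnion₀ ?_ ?_, tsum_fintype]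
    · refine Finset.sum_congr rfl fun z _ => ?_
      have heng := engine hM0 hM1 hπ hP (n := n) (a := n-1) hn le_rfl (fun _ => z) x
        (hAm (n-1-1))
      rw [cyl_single] at heng
      exact heng
    · intro z z' hzz
      refine Disjoint.aedisjoint (Set.disjoint_left.mpr fun ω h1 h2 => hzz ?_)
      rw [← h1.1.2, ← h2.1.2]
    · exact fun z => (hAamb.nullMeasurableSet.inter
        (coord_nm hM0 hM1 hπ hP (by omega) z)).inter (coord_nm hM0 hM1 hπ hP hn x)
  -- the candidate sequence
  set π' : ℤ → E → ℝ :=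
    fun n x => (P (A ∩ {ω : ℤ → E | ω n = x})).toReal / (P A).toReal with hπ'def
  have htoReal_sum : ∀ n : ℤ, n ≤ 0 →
      ∑ x : E, (P (A ∩ {ω : ℤ → E | ω n = x})).toReal = (P A).toReal := by
    intro n hn
    rw [← ENNReal.toReal_sum (fun x _ => measure_ne_top _ _), hsum n hn]
  have habs : IsAbsProbSeq M π' := by
    intro n hn
    refine ⟨fun x => div_nonneg ENNReal.toReal_nonneg ENNReal.toReal_nonneg, ?_, ?_⟩
    · rw [hπ'def]
      rw [← Finset.sum_div, htoReal_sum n hn, div_self hPAr]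
    · intro x
      have hnum : ∑ z : E, (P (A ∩ {ω : ℤ → E | ω (n-1) = z})).toReal * M n z x
          = (P (A ∩ {ω : ℤ → E | ω n = x})).toReal := by
        rw [hker n hn x, ENNReal.toReal_sum (fun z _ =>
          ENNReal.mul_ne_top (measure_ne_top _ _) ENNReal.ofReal_ne_top)]
        refine Finset.sum_congr rfl fun z _ => ?_
        rw [ENNReal.toReal_mul, ENNReal.toReal_ofReal (hM0 n z x)]
      simp only [hπ'def]
      calc ∑ z : E, (P (A ∩ {ω : ℤ → E | ω (n-1) = z})).toReal / (P A).toReal * M n z x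
          = ∑ z : E, (P (A ∩ {ω : ℤ → E | ω (n-1) = z})).toReal * M n z x / (P A).toReal :=
            Finset.sum_congr rfl fun z _ => div_mul_eq_mul_div _ _ _
        _ = (∑ z : E, (P (A ∩ {ω : ℤ → E | ω (n-1) = z})).toReal * M n z x) / (P A).toReal :=
            (Finset.sum_div _ _ _).symm
        _ = (P (A ∩ {ω : ℤ → E | ω n = x})).toReal / (P A).toReal := by rw [hnum]
  refine ⟨π', habs, ?_⟩
  by_contra hcon
  push_neg at hcon
  have hInd : ∀ n : ℤ, n ≤ 0 → ∀ x : E,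
      P (A ∩ {ω : ℤ → E | ω n = x}) = P A * ENNReal.ofReal (π n x) := by
    intro n hn x
    have h1 : π' n x = π n x := congrFun (hcon n hn) x
    rw [hπ'def] at h1
    simp only at h1
    rw [div_eq_iff hPAr] at h1
    calc P (A ∩ {ω : ℤ → E | ω n = x})
        = ENNReal.ofReal ((P (A ∩ {ω : ℤ → E | ω n = x})).toReal) :=
          (ENNReal.ofReal_toReal (measure_ne_top _ _)).symm
      _ = ENNReal.ofReal (π n x * (P A).toReal) := by rw [h1]
      _ = ENNReal.ofReal (π n x) * ENNReal.ofReal ((P A).toReal) :=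
          ENNReal.ofReal_mul (pi_nonneg hπ hn x)
      _ = P A * ENNReal.ofReal (π n x) := by rw [ENNReal.ofReal_toReal hPAtop, mul_comm]
  have hPP := indep_of_marginals hM0 hM1 hπ hP hAm hInd
  have hr : (P A).toReal = (P A).toReal * (P A).toReal := by
    rw [← ENNReal.toReal_mul, ← hPP]
  have hr1 : (1:ℝ) = (P A).toReal :=
    mul_left_cancel₀ hPAr (by rw [mul_one, ← hr])
  have hPA1 : P A = 1 := by
    rw [← ENNReal.ofReal_toReal hPAtop, ← hr1]
    simp
  rw [hPA1] at hA1
  exact absurd hA1 (lt_irrefl _)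
end

section
/- Suppose the tail σ-algebra of a nonhomogeneous Markov chain with kernels M^y on finite E is not trivial under the law P^y (i.e., there is a tail event of probability strictly between 0 and 1). Then the conditional distributions x ↦ P^y(X̃_k = x | tail σ-algebra) form, for each version, a sequence of absolute probabilities for M^y satisfying ∑_{x'} P^y(X̃_{k−1} = x' | tail) M_k^y(x', x) = P^y(X̃_k = x | tail) almost surely; consequently M^y admits more than one sequence of absolute probabilities. -/
open scoped BigOperators
open MeasureTheory Filter

namespace NontrivTailAux

open scoped Classical

set_option linter.unusedSectionVars false

variable {E : Type*} [Fintype E] [MeasurableSpace E]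

/-- indicator of the coordinate event `{ω | ω k = x}`. -/
noncomputable def ind (k : ℤ) (x : E) : (ℤ → E) → ℝ :=
  Set.indicator {ω : ℤ → E | ω k = x} (fun _ => (1 : ℝ))

lemma ind_apply (k : ℤ) (x : E) (ω : ℤ → E) :
    ind k x ω = if ω k = x then 1 else 0 := by
  simp [ind, Set.indicator_apply, Set.mem_setOf_eq]

lemma ind_nonneg (k : ℤ) (x : E) (ω : ℤ → E) : 0 ≤ ind k x ω := by
  rw [ind_apply]; split <;> norm_num

lemma ind_le_one (k : ℤ) (x : E) (ω : ℤ → E) : ‖ind k x ω‖ ≤ 1 := by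
  rw [ind_apply]; split <;> simp

lemma sum_mul_ind (k : ℤ) (ω : ℤ → E) (F : E → ℝ) :
    ∑ w : E, F w * ind k w ω = F (ω k) := by
  classical
  simp only [ind_apply, mul_ite, mul_one, mul_zero]
  rw [Finset.sum_ite_eq Finset.univ (ω k) F]
  simp

lemma sum_ind (k : ℤ) (ω : ℤ → E) : ∑ x : E, ind k x ω = 1 := by
  classical
  have := sum_mul_ind k ω (fun _ => (1 : ℝ))
  simpa using this

lemma coordSigmaLE_le_pi (n : ℤ) : coordSigmaLE E n ≤ MeasurableSpace.pi := by
  refine iSup₂_le fun k _ => ?_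
  exact MeasurableSpace.comap_le_iff_le_map.mpr fun s hs => (measurable_pi_apply k) hs

lemma measurableSet_coord {j n : ℤ} (h : j ≤ n) {S : Set E} (hS : MeasurableSet S) :
    MeasurableSet[coordSigmaLE E n] ((fun ω : ℤ → E => ω j) ⁻¹' S) := by
  have : MeasurableSet[MeasurableSpace.comap (fun ω : ℤ → E => ω j) inferInstance]
      ((fun ω : ℤ → E => ω j) ⁻¹' S) := ⟨S, hS, rfl⟩
  exact le_iSup₂ (f := fun (k : ℤ) (_ : k ∈ Set.Iic n) =>
    MeasurableSpace.comap (fun ω : ℤ → E => ω k) inferInstance) j h _ this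

lemma tailSigma_le (n : ℤ) : tailSigma E ≤ coordSigmaLE E n := iInf_le _ n

lemma tailSigma_le_pi : tailSigma E ≤ MeasurableSpace.pi :=
  (tailSigma_le 0).trans (coordSigmaLE_le_pi 0)


section Main

variable {M : ℤ → E → E → ℝ} {P : Measure (ℤ → E)} [IsProbabilityMeasure P]

lemma integrable_ind
    (hM1 : ∀ n x, ∑ x', M n x x' = 1)
    (hMarkov : ∀ k ≤ (0 : ℤ), ∀ x : E,
      (P[ind k x | coordSigmaLE E (k - 1)]) =ᵐ[P] fun ω => M k (ω (k - 1)) x)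
    {k : ℤ} (hk : k ≤ 0) (x : E) : Integrable (ind k x) P := by
  classical
  have hm : coordSigmaLE E (k - 1) ≤ (MeasurableSpace.pi : MeasurableSpace (ℤ → E)) :=
    coordSigmaLE_le_pi _
  set S : Finset E := Finset.univ.filter (fun y => Integrable (ind k y) P) with hS
  have hSmem : ∀ y, y ∈ S ↔ Integrable (ind k y) P := by intro y; simp [hS]
  have hMzero : ∀ y, y ∉ S → (fun ω : ℤ → E => M k (ω (k - 1)) y) =ᵐ[P] 0 := by
    intro y hy
    have hni : ¬ Integrable (ind k y) P := fun h => hy ((hSmem y).mpr h)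
    have h0 : P[ind k y | coordSigmaLE E (k - 1)] = 0 := condExp_of_not_integrable hni
    have h1 := (hMarkov k hk y).symm
    rw [h0] at h1; exact h1
  have hMint : ∀ y ∈ S, Integrable (fun ω : ℤ → E => M k (ω (k - 1)) y) P := by
    intro y _
    exact (integrable_condExp (f := ind k y) (m := coordSigmaLE E (k - 1))).congr
      (hMarkov k hk y)
  have hint_eq : ∀ y ∈ S, ∫ ω, ind k y ω ∂P = ∫ ω, M k (ω (k - 1)) y ∂P := by
    intro y hy
    rw [← integral_condExp hm (f := ind k y)]
    exact integral_congr_ae (hMarkov k hk y)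
  have hsumM : ∑ y ∈ S, ∫ ω, M k (ω (k - 1)) y ∂P = 1 := by
    rw [← integral_finset_sum S hMint]
    have hz : ∀ᵐ ω ∂P, ∀ y, y ∉ S → M k (ω (k - 1)) y = 0 := by
      rw [ae_all_iff]
      intro y
      by_cases hy : y ∈ S
      · exact Filter.Eventually.of_forall (fun ω h => absurd hy h)
      · filter_upwards [hMzero y hy] with ω h _
        simpa using h
    have hae : (fun ω : ℤ → E => ∑ y ∈ S, M k (ω (k - 1)) y) =ᵐ[P] fun _ => (1 : ℝ) := by
      filter_upwards [hz] with ω hω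
      have h2 : ∑ y ∈ S, M k (ω (k - 1)) y = ∑ y : E, M k (ω (k - 1)) y :=
        Finset.sum_subset (Finset.subset_univ S) (fun y _ hy => hω y hy)
      rw [h2, hM1]
    rw [integral_congr_ae hae]
    simp
  have key : ∀ y, y ∉ S → ind k y =ᵐ[P] 0 := by
    intro y hy
    have hintS : Integrable (fun ω => ∑ z ∈ S, ind k z ω) P :=
      integrable_finset_sum _ (fun z hz => (hSmem z).mp hz)
    have hint : Integrable (fun ω => 1 - ∑ z ∈ S, ind k z ω) P :=
      (integrable_const (1 : ℝ)).sub hintS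
    have hnn : 0 ≤ fun ω => 1 - ∑ z ∈ S, ind k z ω := by
      intro ω
      have h1 : ∑ z ∈ S, ind k z ω ≤ ∑ z : E, ind k z ω :=
        Finset.sum_le_sum_of_subset_of_nonneg (Finset.subset_univ S)
          (fun z _ _ => ind_nonneg k z ω)
      rw [sum_ind] at h1
      simp only [Pi.zero_apply]
      linarith
    have hzero : ∫ ω, (1 - ∑ z ∈ S, ind k z ω) ∂P = 0 := by
      rw [integral_sub (integrable_const 1) hintS, integral_finset_sum _
        (fun z hz => (hSmem z).mp hz), Finset.sum_congr rfl hint_eq, hsumM]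
      simp
    have hae0 : (fun ω => 1 - ∑ z ∈ S, ind k z ω) =ᵐ[P] 0 :=
      (integral_eq_zero_iff_of_nonneg hnn hint).mp hzero
    filter_upwards [hae0] with ω hω
    have h2 : ∑ z ∈ S, ind k z ω + ind k y ω ≤ 1 := by
      have h4 : ∑ z ∈ insert y S, ind k z ω ≤ ∑ z : E, ind k z ω :=
        Finset.sum_le_sum_of_subset_of_nonneg (Finset.subset_univ _)
          (fun z _ _ => ind_nonneg k z ω)
      rw [Finset.sum_insert hy, sum_ind] at h4
      linarith
    have h3 := ind_nonneg k y ω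
    simp only [Pi.zero_apply] at hω ⊢
    linarith
  by_cases hy : x ∈ S
  · exact (hSmem x).mp hy
  · exact (integrable_zero _ _ _).congr (key x hy).symm

lemma peel
    (hM1 : ∀ n x, ∑ x', M n x x' = 1)
    (hMarkov : ∀ k ≤ (0 : ℤ), ∀ x : E,
      (P[ind k x | coordSigmaLE E (k - 1)]) =ᵐ[P] fun ω => M k (ω (k - 1)) x)
    {m : ℤ} (hm : m ≤ 0) (z : E) (t : Finset ℤ) (S : ℤ → Set E)
    (hSmeas : ∀ j ∈ t, MeasurableSet (S j)) (ht : ∀ j ∈ t, j ≤ m - 1)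
    {B : Set (ℤ → E)} (hB : MeasurableSet[tailSigma E] B) :
    ∫ ω, Set.indicator (B ∩ ⋂ j ∈ t, (fun ω' : ℤ → E => ω' j) ⁻¹' S j) (fun _ => (1 : ℝ)) ω
        * ind m z ω ∂P
      = ∑ w : E, (M m w z
            * Set.indicator (if m - 1 ∈ t then S (m - 1) else Set.univ) (fun _ => (1 : ℝ)) w)
          * ∫ ω, Set.indicator (B ∩ ⋂ j ∈ t.erase (m - 1), (fun ω' : ℤ → E => ω' j) ⁻¹' S j)
              (fun _ => (1 : ℝ)) ω * ind (m - 1) w ω ∂P := by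
  classical
  have hmle : coordSigmaLE E (m - 1) ≤ (MeasurableSpace.pi : MeasurableSpace (ℤ → E)) :=
    coordSigmaLE_le_pi _
  set D : Set (ℤ → E) := B ∩ ⋂ j ∈ t, (fun ω' : ℤ → E => ω' j) ⁻¹' S j with hD
  set D' : Set (ℤ → E) := B ∩ ⋂ j ∈ t.erase (m - 1), (fun ω' : ℤ → E => ω' j) ⁻¹' S j with hD'
  have hDm : MeasurableSet[coordSigmaLE E (m - 1)] D := by
    refine MeasurableSet.inter (tailSigma_le (m - 1) _ hB) ?_
    exact Finset.measurableSet_biInter t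
      (fun j hj => measurableSet_coord (ht j hj) (hSmeas j hj))
  have hD'm : MeasurableSet[coordSigmaLE E (m - 1)] D' := by
    refine MeasurableSet.inter (tailSigma_le (m - 1) _ hB) ?_
    exact Finset.measurableSet_biInter _
      (fun j hj => measurableSet_coord (ht j (Finset.mem_of_mem_erase hj))
        (hSmeas j (Finset.mem_of_mem_erase hj)))
  have hm1 : m - 1 ≤ (0 : ℤ) := by omega
  have hindm : Integrable (ind m z) P := integrable_ind hM1 hMarkov hm z
  have hgSM : StronglyMeasurable[coordSigmaLE E (m - 1)] (D.indicator (fun _ => (1 : ℝ))) :=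
    stronglyMeasurable_const.indicator hDm
  have hgamb : AEStronglyMeasurable (D.indicator (fun _ => (1 : ℝ))) P :=
    ((hgSM.mono hmle).aestronglyMeasurable)
  have hbound : ∀ (U : Set (ℤ → E)) (ω : ℤ → E),
      ‖U.indicator (fun _ => (1 : ℝ)) ω‖ ≤ 1 := by
    intro U ω
    rw [Set.indicator_apply]
    split <;> simp
  have hint1 : Integrable (D.indicator (fun _ => (1 : ℝ)) * ind m z) P :=
    hindm.bdd_mul hgamb (c := 1) (ae_of_all _ (hbound D))
  have hint2 : ∀ w : E, Integrable (D'.indicator (fun _ => (1 : ℝ)) * ind (m - 1) w) P :=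
    fun w => (integrable_ind hM1 hMarkov hm1 w).bdd_mul
      (((stronglyMeasurable_const.indicator hD'm).mono hmle).aestronglyMeasurable)
      (c := 1) (ae_of_all _ (hbound D'))
  -- the key pointwise identity
  have key : ∀ ω : ℤ → E, D.indicator (fun _ => (1 : ℝ)) ω
      = Set.indicator (if m - 1 ∈ t then S (m - 1) else Set.univ) (fun _ => (1 : ℝ)) (ω (m - 1))
        * D'.indicator (fun _ => (1 : ℝ)) ω := by
    intro ω
    by_cases hmem : m - 1 ∈ t
    · have hDsplit : D = ((fun ω' : ℤ → E => ω' (m - 1)) ⁻¹' S (m - 1)) ∩ D' := by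
        rw [hD, hD']
        conv_lhs => rw [← Finset.insert_erase hmem]
        rw [Finset.set_biInter_insert]
        ext ω'
        simp only [Set.mem_inter_iff, Set.mem_preimage, Set.mem_iInter]
        tauto
      rw [if_pos hmem, hDsplit]
      by_cases h1 : ω ∈ D' <;> by_cases h2 : ω (m - 1) ∈ S (m - 1) <;>
        simp [Set.indicator_apply, Set.mem_inter_iff, Set.mem_preimage, h1, h2]
    · rw [if_neg hmem]
      have : t.erase (m - 1) = t := Finset.erase_eq_of_notMem hmem
      rw [hD', this, ← hD]
      simp
  -- step 1 : replace ind m z by its conditional expectation, then by the Markov kernel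
  have step1 : ∫ ω, D.indicator (fun _ => (1 : ℝ)) ω * ind m z ω ∂P
      = ∫ ω, D.indicator (fun _ => (1 : ℝ)) ω * M m (ω (m - 1)) z ∂P := by
    have hpull : P[D.indicator (fun _ => (1 : ℝ)) * ind m z | coordSigmaLE E (m - 1)]
        =ᵐ[P] D.indicator (fun _ => (1 : ℝ)) * P[ind m z | coordSigmaLE E (m - 1)] :=
      condExp_mul_of_stronglyMeasurable_left hgSM hint1 hindm
    calc ∫ ω, D.indicator (fun _ => (1 : ℝ)) ω * ind m z ω ∂P
        = ∫ ω, (P[D.indicator (fun _ => (1 : ℝ)) * ind m z | coordSigmaLE E (m - 1)]) ω ∂P :=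
          (integral_condExp hmle).symm
      _ = ∫ ω, D.indicator (fun _ => (1 : ℝ)) ω * M m (ω (m - 1)) z ∂P := by
          refine integral_congr_ae (hpull.trans ?_)
          filter_upwards [hMarkov m hm z] with ω hω
          simp only [Pi.mul_apply, hω]
  -- step 2 : expand the kernel as a sum over the value of ω (m-1)
  have step2 : ∀ ω : ℤ → E, D.indicator (fun _ => (1 : ℝ)) ω * M m (ω (m - 1)) z
      = ∑ w : E, (M m w z
            * Set.indicator (if m - 1 ∈ t then S (m - 1) else Set.univ) (fun _ => (1 : ℝ)) w)
          * (D'.indicator (fun _ => (1 : ℝ)) ω * ind (m - 1) w ω) := by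
    intro ω
    have hsum := sum_mul_ind (m - 1) ω (fun w => (M m w z
        * Set.indicator (if m - 1 ∈ t then S (m - 1) else Set.univ) (fun _ => (1 : ℝ)) w)
        * D'.indicator (fun _ => (1 : ℝ)) ω)
    calc D.indicator (fun _ => (1 : ℝ)) ω * M m (ω (m - 1)) z
        = (M m (ω (m - 1)) z
            * Set.indicator (if m - 1 ∈ t then S (m - 1) else Set.univ) (fun _ => (1 : ℝ))
                (ω (m - 1))) * D'.indicator (fun _ => (1 : ℝ)) ω := by
          rw [key ω]; ring
      _ = ∑ w : E, ((M m w z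
            * Set.indicator (if m - 1 ∈ t then S (m - 1) else Set.univ) (fun _ => (1 : ℝ)) w)
            * D'.indicator (fun _ => (1 : ℝ)) ω) * ind (m - 1) w ω := hsum.symm
      _ = _ := by
          refine Finset.sum_congr rfl fun w _ => ?_
          ring
  calc ∫ ω, D.indicator (fun _ => (1 : ℝ)) ω * ind m z ω ∂P
      = ∫ ω, D.indicator (fun _ => (1 : ℝ)) ω * M m (ω (m - 1)) z ∂P := step1
    _ = ∫ ω, ∑ w : E, (M m w z
            * Set.indicator (if m - 1 ∈ t then S (m - 1) else Set.univ) (fun _ => (1 : ℝ)) w)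
          * (D'.indicator (fun _ => (1 : ℝ)) ω * ind (m - 1) w ω) ∂P := by
        refine integral_congr_ae (Filter.Eventually.of_forall fun ω => step2 ω)
    _ = ∑ w : E, ∫ ω, (M m w z
            * Set.indicator (if m - 1 ∈ t then S (m - 1) else Set.univ) (fun _ => (1 : ℝ)) w)
          * (D'.indicator (fun _ => (1 : ℝ)) ω * ind (m - 1) w ω) ∂P := by
        refine integral_finset_sum _ fun w _ => ?_
        exact ((hint2 w).const_mul _)
    _ = ∑ w : E, (M m w z
            * Set.indicator (if m - 1 ∈ t then S (m - 1) else Set.univ) (fun _ => (1 : ℝ)) w)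
          * ∫ ω, D'.indicator (fun _ => (1 : ℝ)) ω * ind (m - 1) w ω ∂P := by
        refine Finset.sum_congr rfl fun w _ => ?_
        exact integral_const_mul _ _

lemma chainBase {B : Set (ℤ → E)} {c : ℝ}
    (hBc : ∀ n ≤ (0 : ℤ), ∀ x : E,
      ∫ ω, B.indicator (fun _ => (1 : ℝ)) ω * ind n x ω ∂P = c * ∫ ω, ind n x ω ∂P)
    {m : ℤ} (hm : m ≤ 0) (z : E) (S : ℤ → Set E) {t : Finset ℤ} (ht0 : t = ∅) :
    ∫ ω, Set.indicator (B ∩ ⋂ j ∈ t, (fun ω' : ℤ → E => ω' j) ⁻¹' S j) (fun _ => (1 : ℝ)) ω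
        * ind m z ω ∂P
      = c * ∫ ω, Set.indicator (Set.univ ∩ ⋂ j ∈ t, (fun ω' : ℤ → E => ω' j) ⁻¹' S j)
          (fun _ => (1 : ℝ)) ω * ind m z ω ∂P := by
  subst ht0
  simp only [Finset.notMem_empty, Set.iInter_of_empty, Set.iInter_univ, Set.inter_univ,
    Set.indicator_univ]
  simp only [Pi.one_apply, one_mul]
  exact hBc m hm z

lemma chain
    (hM1 : ∀ n x, ∑ x', M n x x' = 1)
    (hMarkov : ∀ k ≤ (0 : ℤ), ∀ x : E,
      (P[ind k x | coordSigmaLE E (k - 1)]) =ᵐ[P] fun ω => M k (ω (k - 1)) x)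
    {B : Set (ℤ → E)} (hB : MeasurableSet[tailSigma E] B) {c : ℝ}
    (hBc : ∀ n ≤ (0 : ℤ), ∀ x : E,
      ∫ ω, B.indicator (fun _ => (1 : ℝ)) ω * ind n x ω ∂P = c * ∫ ω, ind n x ω ∂P) :
    ∀ (d : ℕ) (m : ℤ), m ≤ 0 → ∀ (z : E) (t : Finset ℤ) (S : ℤ → Set E),
      (∀ j ∈ t, MeasurableSet (S j)) → (∀ j ∈ t, j ≤ m - 1) →
      (∀ j ∈ t, m - 1 - j ≤ (d : ℤ)) →
      ∫ ω, Set.indicator (B ∩ ⋂ j ∈ t, (fun ω' : ℤ → E => ω' j) ⁻¹' S j) (fun _ => (1 : ℝ)) ω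
          * ind m z ω ∂P
        = c * ∫ ω, Set.indicator (Set.univ ∩ ⋂ j ∈ t, (fun ω' : ℤ → E => ω' j) ⁻¹' S j)
            (fun _ => (1 : ℝ)) ω * ind m z ω ∂P := by
  intro d
  induction d using Nat.strong_induction_on with
  | _ d IH =>
    intro m hm z t S hSmeas ht hd
    by_cases ht0 : t = ∅
    · exact chainBase hBc hm z S ht0
    · rw [peel hM1 hMarkov hm z t S hSmeas ht hB,
        peel hM1 hMarkov hm z t S hSmeas ht
          (@MeasurableSet.univ (ℤ → E) (tailSigma E)), Finset.mul_sum]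
      refine Finset.sum_congr rfl fun w _ => ?_
      have hrec : ∫ ω, Set.indicator
            (B ∩ ⋂ j ∈ t.erase (m - 1), (fun ω' : ℤ → E => ω' j) ⁻¹' S j) (fun _ => (1 : ℝ)) ω
            * ind (m - 1) w ω ∂P
          = c * ∫ ω, Set.indicator
            (Set.univ ∩ ⋂ j ∈ t.erase (m - 1), (fun ω' : ℤ → E => ω' j) ⁻¹' S j)
            (fun _ => (1 : ℝ)) ω * ind (m - 1) w ω ∂P := by
        by_cases ht1 : t.erase (m - 1) = ∅
        · exact chainBase hBc (by omega) w S ht1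
        · obtain ⟨j0, hj0⟩ := Finset.nonempty_iff_ne_empty.mpr ht1
          have hj0t : j0 ∈ t := Finset.mem_of_mem_erase hj0
          have hj0ne : j0 ≠ m - 1 := Finset.ne_of_mem_erase hj0
          have hd1 : 1 ≤ d := by
            have h1 := hd j0 hj0t
            have h2 := ht j0 hj0t
            omega
          refine IH (d - 1) (by omega) (m - 1) (by omega) w (t.erase (m - 1)) S
            (fun j hj => hSmeas j (Finset.mem_of_mem_erase hj))
            (fun j hj => by
              have := ht j (Finset.mem_of_mem_erase hj)
              have := Finset.ne_of_mem_erase hj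
              omega)
            (fun j hj => by
              have := hd j (Finset.mem_of_mem_erase hj)
              have := Finset.ne_of_mem_erase hj
              have := ht j (Finset.mem_of_mem_erase hj)
              omega)
      rw [hrec]
      ring

lemma isAbsProbSeq_cond
    (hM1 : ∀ n x, ∑ x', M n x x' = 1)
    (hMarkov : ∀ k ≤ (0 : ℤ), ∀ x : E,
      (P[ind k x | coordSigmaLE E (k - 1)]) =ᵐ[P] fun ω => M k (ω (k - 1)) x)
    {B : Set (ℤ → E)} (hBt : MeasurableSet[tailSigma E] B) (hB0 : P B ≠ 0) :
    IsAbsProbSeq M (fun n x =>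
      (∫ ω, B.indicator (fun _ => (1 : ℝ)) ω * ind n x ω ∂P) / (P B).toReal) := by
  classical
  have hBamb : MeasurableSet B := tailSigma_le_pi _ hBt
  have hq : 0 < (P B).toReal := ENNReal.toReal_pos hB0 (measure_ne_top P B)
  have hintB : ∀ (k : ℤ), k ≤ 0 → ∀ (x : E),
      Integrable (fun ω => B.indicator (fun _ => (1 : ℝ)) ω * ind k x ω) P := by
    intro k hk x
    refine (integrable_ind hM1 hMarkov hk x).bdd_mul
      ((measurable_const.indicator hBamb).aestronglyMeasurable) (c := 1) (ae_of_all _ fun ω => ?_)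
    rw [Set.indicator_apply]
    split <;> simp
  intro n hn
  refine ⟨fun x => ?_, ?_, fun x => ?_⟩
  · refine div_nonneg (integral_nonneg fun ω => ?_) hq.le
    exact mul_nonneg (Set.indicator_nonneg (fun _ _ => zero_le_one) ω) (ind_nonneg n x ω)
  · rw [← Finset.sum_div, div_eq_one_iff_eq hq.ne']
    rw [← integral_finset_sum _ (fun x _ => hintB n hn x)]
    have hpt : ∀ ω : ℤ → E, ∑ x : E, B.indicator (fun _ => (1 : ℝ)) ω * ind n x ω
        = B.indicator (fun _ => (1 : ℝ)) ω := by
      intro ω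
      rw [← Finset.mul_sum, sum_ind, mul_one]
    rw [integral_congr_ae (Filter.Eventually.of_forall hpt)]
    rw [MeasureTheory.integral_indicator_const (1 : ℝ) hBamb]
    simp [Measure.real]
  · have hp := peel hM1 hMarkov hn x (∅ : Finset ℤ) (fun _ => Set.univ)
      (by simp) (by simp) hBt
    simp only [Finset.notMem_empty, Set.iInter_of_empty, Set.iInter_univ, Set.inter_univ,
      ite_self, Set.indicator_univ, Finset.erase_empty,
      Pi.one_apply, mul_one] at hp
    simp only []
    rw [hp, Finset.sum_div]
    refine Finset.sum_congr rfl fun w _ => ?_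
    ring

lemma tail_recursion
    (hM1 : ∀ n x, ∑ x', M n x x' = 1)
    (hMarkov : ∀ k ≤ (0 : ℤ), ∀ x : E,
      (P[ind k x | coordSigmaLE E (k - 1)]) =ᵐ[P] fun ω => M k (ω (k - 1)) x)
    {k : ℤ} (hk : k ≤ 0) (x : E) :
    (fun ω => ∑ x' : E, (P[ind (k - 1) x' | tailSigma E]) ω * M k x' x)
      =ᵐ[P] (P[ind k x | tailSigma E]) := by
  have htle : tailSigma E ≤ coordSigmaLE E (k - 1) := tailSigma_le _
  have hmle : coordSigmaLE E (k - 1) ≤ (MeasurableSpace.pi : MeasurableSpace (ℤ → E)) :=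
    coordSigmaLE_le_pi _
  have h1 : P[ind k x | tailSigma E]
      =ᵐ[P] P[P[ind k x | coordSigmaLE E (k - 1)] | tailSigma E] :=
    (condExp_condExp_of_le htle hmle).symm
  have h2 : P[P[ind k x | coordSigmaLE E (k - 1)] | tailSigma E]
      =ᵐ[P] P[(fun ω => M k (ω (k - 1)) x) | tailSigma E] :=
    condExp_congr_ae (hMarkov k hk x)
  have hfun : (fun ω : ℤ → E => M k (ω (k - 1)) x)
      = ∑ x' : E, (M k x' x) • ind (k - 1) x' := by
    funext ω
    rw [Finset.sum_apply]
    simp only [Pi.smul_apply, smul_eq_mul]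
    exact (sum_mul_ind (k - 1) ω (fun w => M k w x)).symm
  have h3 : P[(fun ω : ℤ → E => M k (ω (k - 1)) x) | tailSigma E]
      =ᵐ[P] ∑ x' : E, P[(M k x' x) • ind (k - 1) x' | tailSigma E] := by
    rw [hfun]
    exact condExp_finsetSum
      (fun x' _ => Integrable.smul (M k x' x) (integrable_ind hM1 hMarkov (by omega) x')) (tailSigma E)
  have h4 : ∀ᵐ ω ∂P, ∀ x' : E,
      (P[(M k x' x) • ind (k - 1) x' | tailSigma E]) ω
        = M k x' x * (P[ind (k - 1) x' | tailSigma E]) ω := by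
    rw [ae_all_iff]
    intro x'
    filter_upwards [condExp_smul (m := tailSigma E) (μ := P) (M k x' x) (ind (k - 1) x')]
      with ω hω
    simpa using hω
  have h5 : (∑ x' : E, P[(M k x' x) • ind (k - 1) x' | tailSigma E])
      =ᵐ[P] (fun ω => ∑ x' : E, (P[ind (k - 1) x' | tailSigma E]) ω * M k x' x) := by
    filter_upwards [h4] with ω hω
    rw [Finset.sum_apply]
    refine Finset.sum_congr rfl fun x' _ => ?_
    rw [hω x', mul_comm]
  exact h5.symm.trans (h3.symm.trans (h2.symm.trans h1.symm))

end Main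

end NontrivTailAux

/-- If the tail σ-algebra of a nonhomogeneous Markov chain with kernels `M` is
nontrivial under its law `P`, then the conditional distributions given the tail
σ-algebra satisfy the absolute-probability recursion almost surely; consequently
`M` admits more than one sequence of absolute probabilities. -/
theorem nontrivial_tail_conditional_absolute_probabilities {E : Type*} [Fintype E]
    [Nonempty E] [MeasurableSpace E]
    (M : ℤ → E → E → ℝ) (hM0 : ∀ n x x', 0 ≤ M n x x') (hM1 : ∀ n x, ∑ x', M n x x' = 1)
    (P : Measure (ℤ → E)) [IsProbabilityMeasure P]
    (hMarkov : ∀ k ≤ (0 : ℤ), ∀ x : E,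
      (P[Set.indicator {ω : ℤ → E | ω k = x} (fun _ => (1 : ℝ)) | coordSigmaLE E (k - 1)])
        =ᵐ[P] fun ω => M k (ω (k - 1)) x)
    (hTail : ∃ A : Set (ℤ → E), MeasurableSet[tailSigma E] A ∧ 0 < P A ∧ P A < 1) :
    (∀ k ≤ (0 : ℤ), ∀ x : E,
      (fun ω => ∑ x' : E,
          (P[Set.indicator {ω' : ℤ → E | ω' (k - 1) = x'} (fun _ => (1 : ℝ)) | tailSigma E]) ω
            * M k x' x)
        =ᵐ[P] (P[Set.indicator {ω' : ℤ → E | ω' k = x} (fun _ => (1 : ℝ)) | tailSigma E]))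
    ∧ ∃ π π' : ℤ → E → ℝ, IsAbsProbSeq M π ∧ IsAbsProbSeq M π' ∧
        ∃ n ≤ (0 : ℤ), π n ≠ π' n := by
  classical
  obtain ⟨A, hAt, hA0, hA1⟩ := hTail
  have hAamb : MeasurableSet A := NontrivTailAux.tailSigma_le_pi _ hAt
  have hMarkov' : ∀ k ≤ (0 : ℤ), ∀ x : E,
      (P[NontrivTailAux.ind k x | coordSigmaLE E (k - 1)]) =ᵐ[P] fun ω => M k (ω (k - 1)) x :=
    hMarkov
  constructor
  · intro k hk x
    exact NontrivTailAux.tail_recursion hM1 hMarkov' hk x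
  · set p := (P A).toReal with hpdef
    have hp0 : 0 < p := ENNReal.toReal_pos hA0.ne' (measure_ne_top P A)
    have hp1 : p < 1 := by
      have h := ENNReal.toReal_strict_mono (by simp) hA1
      simpa using h
    have hAc0 : P Aᶜ ≠ 0 := by
      rw [prob_compl_eq_one_sub hAamb]
      intro h
      rw [tsub_eq_zero_iff_le] at h
      exact absurd (lt_of_lt_of_le hA1 h) (lt_irrefl _)
    have hq : (P Aᶜ).toReal = 1 - p := by
      rw [prob_compl_eq_one_sub hAamb,
        ENNReal.toReal_sub_of_le hA1.le (by simp)]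
      simp
      exact hpdef.symm
    refine ⟨_, _, NontrivTailAux.isAbsProbSeq_cond hM1 hMarkov' hAt hA0.ne',
      NontrivTailAux.isAbsProbSeq_cond hM1 hMarkov' hAt.compl hAc0, ?_⟩
    by_contra hcon
    push_neg at hcon
    -- step 1 : independence of A from every single coordinate event
    have hintprod : ∀ (B : Set (ℤ → E)), MeasurableSet B → ∀ (k : ℤ), k ≤ 0 → ∀ x : E,
        Integrable (fun ω => B.indicator (fun _ => (1 : ℝ)) ω * NontrivTailAux.ind k x ω) P := by
      intro B hB k hk x
      refine (NontrivTailAux.integrable_ind hM1 hMarkov' hk x).bdd_mul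
        ((measurable_const.indicator hB).aestronglyMeasurable) (c := 1) (ae_of_all _ fun ω => ?_)
      rw [Set.indicator_apply]
      split <;> simp
    have hind : ∀ n ≤ (0 : ℤ), ∀ x : E,
        ∫ ω, A.indicator (fun _ => (1 : ℝ)) ω * NontrivTailAux.ind n x ω ∂P
          = p * ∫ ω, NontrivTailAux.ind n x ω ∂P := by
      intro n hn x
      have heq := congrFun (hcon n hn) x
      rw [hq] at heq
      set a := ∫ ω, A.indicator (fun _ => (1 : ℝ)) ω * NontrivTailAux.ind n x ω ∂P with ha
      set b := ∫ ω, Aᶜ.indicator (fun _ => (1 : ℝ)) ω * NontrivTailAux.ind n x ω ∂P with hb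
      set T := ∫ ω, NontrivTailAux.ind n x ω ∂P with hT
      have hsplit : a + b = T := by
        rw [ha, hb, hT, ← integral_add (hintprod A hAamb n hn x) (hintprod Aᶜ hAamb.compl n hn x)]
        refine integral_congr_ae (Filter.Eventually.of_forall fun ω => ?_)
        by_cases hω : ω ∈ A <;> simp [Set.indicator_apply, hω]
      have hq0 : (0 : ℝ) < 1 - p := by linarith
      have h2 : a * (1 - p) = b * p := by
        rw [div_eq_div_iff hp0.ne' hq0.ne'] at heq
        linarith [heq]
      linear_combination h2 + p * hsplit
    -- step 2 : independence of A from all cylinders, then from coordSigmaLE E 0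
    set s : Set (Set (ℤ → E)) := {U | ∃ (t : Finset ℤ) (S : ℤ → Set E),
      (∀ j ∈ t, MeasurableSet (S j)) ∧ (∀ j ∈ t, j ≤ 0) ∧
      U = ⋂ j ∈ t, (fun ω : ℤ → E => ω j) ⁻¹' S j} with hs
    have hPi : IsPiSystem s := by
      rintro U1 ⟨t1, S1, hS1, ht1, rfl⟩ U2 ⟨t2, S2, hS2, ht2, rfl⟩ _
      refine ⟨t1 ∪ t2, fun j => (if j ∈ t1 then S1 j else Set.univ)
          ∩ (if j ∈ t2 then S2 j else Set.univ), ?_, ?_, ?_⟩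
      · intro j _
        refine MeasurableSet.inter ?_ ?_
        · by_cases h1 : j ∈ t1
          · rw [if_pos h1]; exact hS1 j h1
          · rw [if_neg h1]; exact MeasurableSet.univ
        · by_cases h2 : j ∈ t2
          · rw [if_pos h2]; exact hS2 j h2
          · rw [if_neg h2]; exact MeasurableSet.univ
      · intro j hj
        rcases Finset.mem_union.mp hj with h | h
        exacts [ht1 j h, ht2 j h]
      · ext ω
        simp only [Set.mem_inter_iff, Set.mem_iInter, Set.mem_preimage, Finset.mem_union]
        constructor
        · rintro ⟨h1, h2⟩ j hj
          constructor
          · by_cases hj1 : j ∈ t1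
            · rw [if_pos hj1]; exact h1 j hj1
            · rw [if_neg hj1]; trivial
          · by_cases hj2 : j ∈ t2
            · rw [if_pos hj2]; exact h2 j hj2
            · rw [if_neg hj2]; trivial
        · intro h
          constructor
          · intro j hj
            have := (h j (Or.inl hj)).1
            rwa [if_pos hj] at this
          · intro j hj
            have := (h j (Or.inr hj)).2
            rwa [if_pos hj] at this
    have hgen : coordSigmaLE E 0 = MeasurableSpace.generateFrom s := by
      apply le_antisymm
      · refine iSup₂_le fun k hk => ?_
        intro U hU
        obtain ⟨S0, hS0, rfl⟩ := hU
        refine MeasurableSpace.measurableSet_generateFrom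
          ⟨{k}, fun _ => S0, fun _ _ => hS0, fun j hj => ?_, ?_⟩
        · rw [Finset.mem_singleton] at hj
          subst hj
          exact hk
        · simp
      · refine MeasurableSpace.generateFrom_le ?_
        rintro U ⟨t, S, hS, ht, rfl⟩
        exact Finset.measurableSet_biInter _
          (fun j hj => NontrivTailAux.measurableSet_coord (ht j hj) (hS j hj))
    have hcyl : ∀ U ∈ s, P (A ∩ U) = P A * P U := by
      rintro U ⟨t, S, hS, ht, rfl⟩
      by_cases ht0 : t = ∅
      · subst ht0
        simp
      · have htne : t.Nonempty := Finset.nonempty_iff_ne_empty.mpr ht0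
        set m : ℤ := t.max' htne with hmdef
        have hmt : m ∈ t := t.max'_mem htne
        have hm0 : m ≤ 0 := ht m hmt
        set t' : Finset ℤ := t.erase m with ht'def
        set U' : Set (ℤ → E) := ⋂ j ∈ t', (fun ω : ℤ → E => ω j) ⁻¹' S j with hU'def
        have hU'amb : MeasurableSet U' :=
          Finset.measurableSet_biInter _
            (fun j hj => measurable_pi_apply j (hS j (Finset.mem_of_mem_erase hj)))
        have hCylamb : MeasurableSet (⋂ j ∈ t, (fun ω : ℤ → E => ω j) ⁻¹' S j) :=
          Finset.measurableSet_biInter _ (fun j hj => measurable_pi_apply j (hS j hj))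
        have ht'le : ∀ j ∈ t', j ≤ m - 1 := by
          intro j hj
          have h1 := Finset.le_max' t j (Finset.mem_of_mem_erase hj)
          have h2 := Finset.ne_of_mem_erase hj
          omega
        have hdep : ∀ j ∈ t', m - 1 - j ≤ ((m - 1 - t.min' htne).toNat : ℤ) := by
          intro j hj
          have h1 := t.min'_le j (Finset.mem_of_mem_erase hj)
          have h2 := Int.self_le_toNat (m - 1 - t.min' htne)
          omega
        have hchainz : ∀ z : E,
            ∫ ω, Set.indicator (A ∩ ⋂ j ∈ t', (fun ω' : ℤ → E => ω' j) ⁻¹' S j)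
                (fun _ => (1 : ℝ)) ω * NontrivTailAux.ind m z ω ∂P
              = p * ∫ ω, Set.indicator (Set.univ ∩ ⋂ j ∈ t', (fun ω' : ℤ → E => ω' j) ⁻¹' S j)
                (fun _ => (1 : ℝ)) ω * NontrivTailAux.ind m z ω ∂P := by
          intro z
          exact NontrivTailAux.chain hM1 hMarkov' hAt hind
            ((m - 1 - t.min' htne).toNat) m hm0 z t' S
            (fun j hj => hS j (Finset.mem_of_mem_erase hj)) ht'le hdep
        -- split the cylinder at its top coordinate
        have hsplitInt : ∀ (B : Set (ℤ → E)), MeasurableSet B →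
            ∫ ω, Set.indicator (B ∩ ⋂ j ∈ t, (fun ω' : ℤ → E => ω' j) ⁻¹' S j)
                (fun _ => (1 : ℝ)) ω ∂P
              = ∑ z : E, (S m).indicator (fun _ => (1 : ℝ)) z
                  * ∫ ω, Set.indicator (B ∩ U') (fun _ => (1 : ℝ)) ω
                      * NontrivTailAux.ind m z ω ∂P := by
          intro B hB
          have hUsplit : B ∩ ⋂ j ∈ t, (fun ω' : ℤ → E => ω' j) ⁻¹' S j
              = (B ∩ U') ∩ ((fun ω' : ℤ → E => ω' m) ⁻¹' S m) := by
            conv_lhs => rw [← Finset.insert_erase hmt, Finset.set_biInter_insert]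
            rw [hU'def]
            ext ω
            simp only [Set.mem_inter_iff, Set.mem_iInter, Set.mem_preimage]
            tauto
          have hpt : ∀ ω : ℤ → E,
              Set.indicator (B ∩ ⋂ j ∈ t, (fun ω' : ℤ → E => ω' j) ⁻¹' S j)
                  (fun _ => (1 : ℝ)) ω
                = ∑ z : E, (S m).indicator (fun _ => (1 : ℝ)) z
                    * (Set.indicator (B ∩ U') (fun _ => (1 : ℝ)) ω
                        * NontrivTailAux.ind m z ω) := by
            intro ω
            have hsum := NontrivTailAux.sum_mul_ind m ω
              (fun z => (S m).indicator (fun _ => (1 : ℝ)) z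
                * Set.indicator (B ∩ U') (fun _ => (1 : ℝ)) ω)
            calc Set.indicator (B ∩ ⋂ j ∈ t, (fun ω' : ℤ → E => ω' j) ⁻¹' S j)
                  (fun _ => (1 : ℝ)) ω
                = (S m).indicator (fun _ => (1 : ℝ)) (ω m)
                    * Set.indicator (B ∩ U') (fun _ => (1 : ℝ)) ω := by
                  rw [hUsplit]
                  by_cases h1 : ω ∈ B ∩ U' <;> by_cases h2 : ω m ∈ S m <;>
                    simp [Set.indicator_apply, Set.mem_inter_iff, h1, h2]
              _ = ∑ z : E, ((S m).indicator (fun _ => (1 : ℝ)) z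
                    * Set.indicator (B ∩ U') (fun _ => (1 : ℝ)) ω)
                    * NontrivTailAux.ind m z ω := hsum.symm
              _ = _ := by
                  refine Finset.sum_congr rfl fun z _ => ?_
                  ring
          rw [integral_congr_ae (Filter.Eventually.of_forall hpt)]
          rw [integral_finset_sum _ (fun z _ =>
            ((hintprod (B ∩ U') (hB.inter hU'amb) m hm0 z).const_mul _))]
          refine Finset.sum_congr rfl fun z _ => ?_
          exact integral_const_mul _ _
        -- now compute in the reals
        have hreal : (P (A ∩ ⋂ j ∈ t, (fun ω : ℤ → E => ω j) ⁻¹' S j)).toReal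
            = p * (P (⋂ j ∈ t, (fun ω : ℤ → E => ω j) ⁻¹' S j)).toReal := by
          calc (P (A ∩ ⋂ j ∈ t, (fun ω : ℤ → E => ω j) ⁻¹' S j)).toReal
              = ∫ ω, Set.indicator (A ∩ ⋂ j ∈ t, (fun ω' : ℤ → E => ω' j) ⁻¹' S j)
                  (fun _ => (1 : ℝ)) ω ∂P := by
                rw [MeasureTheory.integral_indicator_const (1 : ℝ) (hAamb.inter hCylamb)]
                simp [Measure.real]
            _ = ∑ z : E, (S m).indicator (fun _ => (1 : ℝ)) z
                  * ∫ ω, Set.indicator (A ∩ U') (fun _ => (1 : ℝ)) ω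
                      * NontrivTailAux.ind m z ω ∂P := hsplitInt A hAamb
            _ = p * ∑ z : E, (S m).indicator (fun _ => (1 : ℝ)) z
                  * ∫ ω, Set.indicator (Set.univ ∩ U') (fun _ => (1 : ℝ)) ω
                      * NontrivTailAux.ind m z ω ∂P := by
                rw [Finset.mul_sum]
                refine Finset.sum_congr rfl fun z _ => ?_
                rw [hchainz z]
                ring
            _ = p * ∫ ω, Set.indicator (Set.univ ∩ ⋂ j ∈ t, (fun ω' : ℤ → E => ω' j) ⁻¹' S j)
                  (fun _ => (1 : ℝ)) ω ∂P := by
                rw [hsplitInt Set.univ MeasurableSet.univ]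
            _ = p * (P (⋂ j ∈ t, (fun ω : ℤ → E => ω j) ⁻¹' S j)).toReal := by
                rw [Set.univ_inter,
                  MeasureTheory.integral_indicator_const (1 : ℝ) hCylamb]
                simp [Measure.real]
        have hfin1 : P (A ∩ ⋂ j ∈ t, (fun ω : ℤ → E => ω j) ⁻¹' S j) ≠ ⊤ :=
          measure_ne_top _ _
        have hfin2 : P A * P (⋂ j ∈ t, (fun ω : ℤ → E => ω j) ⁻¹' S j) ≠ ⊤ :=
          ENNReal.mul_ne_top (measure_ne_top _ _) (measure_ne_top _ _)
        refine (ENNReal.toReal_eq_toReal_iff' hfin1 hfin2).mp ?_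
        rw [ENNReal.toReal_mul]
        exact hreal
    -- step 3 : A is independent of coordSigmaLE E 0, hence of itself
    have hIndep : ∀ U : Set (ℤ → E), MeasurableSet[coordSigmaLE E 0] U →
        P (A ∩ U) = P A * P U := by
      refine MeasurableSpace.induction_on_inter (m := coordSigmaLE E 0)
        (C := fun U _ => P (A ∩ U) = P A * P U) hgen hPi (by simp) hcyl ?_ ?_
      · intro U hU hCU
        have hUa : MeasurableSet U := NontrivTailAux.coordSigmaLE_le_pi 0 _ hU
        have hsum1 : P (A ∩ U) + P (A ∩ Uᶜ) = P A := by
          rw [← measure_inter_add_diff A hUa, Set.diff_eq]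
        have hsum2 : P A * P U + P A * P Uᶜ = P A := by
          rw [← mul_add, prob_add_prob_compl hUa, mul_one]
        rw [hCU] at hsum1
        have hne : P A * P U ≠ ⊤ :=
          ENNReal.mul_ne_top (measure_ne_top _ _) (measure_ne_top _ _)
        exact (ENNReal.add_right_inj hne).mp (hsum1.trans hsum2.symm)
      · intro f hdisj hmeasf hCf
        have hma : ∀ i, MeasurableSet (f i) :=
          fun i => NontrivTailAux.coordSigmaLE_le_pi 0 _ (hmeasf i)
        calc P (A ∩ ⋃ i, f i) = P (⋃ i, A ∩ f i) := by rw [Set.inter_iUnion]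
          _ = ∑' i, P (A ∩ f i) := measure_iUnion
              (fun i j hij => (hdisj hij).mono
                Set.inter_subset_right Set.inter_subset_right)
              (fun i => hAamb.inter (hma i))
          _ = ∑' i, P A * P (f i) := tsum_congr hCf
          _ = P A * ∑' i, P (f i) := ENNReal.tsum_mul_left
          _ = P A * P (⋃ i, f i) := by rw [measure_iUnion hdisj hma]
    have hAA := hIndep A (NontrivTailAux.tailSigma_le 0 _ hAt)
    rw [Set.inter_self] at hAA
    have hone : P A = 1 :=
      (ENNReal.mul_eq_left hA0.ne' (measure_ne_top P A)).mp hAA.symm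
    rw [hone] at hA1
    exact absurd hA1 (lt_irrefl _)
end

section
/- Suppose for some n < 0 and k ∈ {n+1,…,0} with k = n+1 there exist a probability distribution ν on finite E and constants 0 < ε⁻ ≤ ε⁺ such that ε⁻ν(x') ≤ M_{n,k}(x,x') ≤ ε⁺ν(x') for all x, x', and suppose φ_{n+1}(x, y_{n+1:0}) > 0 for all x and observations. Then the conditional kernel M_{n+1}^y satisfies M_{n+1}^y(x,x') ≥ (ε⁻/ε⁺) ν̃(x') for a probability distribution ν̃ on E (depending on y), and hence the Dobrushin coefficient satisfies sup_y β(M_{n,k}^y) ≤ 1 − ε⁻/ε⁺ < 1. -/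
open scoped BigOperators

/-- The backward functions `φ_n(x, y_{n:0})` of the HMM: `φ_n ≡ 1` for `n > 0` and
`φ_n(x) = ∑ x', M_n(x,x') g_n(x',y_n) φ_{n+1}(x')` for `n ≤ 0`. -/
noncomputable def phiB {E F : Type*} [Fintype E] (M : ℤ → E → E → ℝ)
    (g : ℤ → E → F → ℝ) (y : ℤ → F) (n : ℤ) (x : E) : ℝ :=
  if _h : n ≤ 0 then ∑ x', M n x x' * g n x' (y n) * phiB M g y (n + 1) x'
  else 1
termination_by (1 - n).toNat
decreasing_by omega

/-- Dobrushin coefficient as the maximal total variation distance between rows. -/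
noncomputable def dobrushin {E : Type*} [Fintype E] (K : E → E → ℝ) : ℝ :=
  ⨆ p : E × E, (1 / 2) * ∑ z, |K p.1 z - K p.2 z|

theorem phiB_nonneg {E F : Type*} [Fintype E] (M : ℤ → E → E → ℝ)
    (hM0 : ∀ n x x', 0 ≤ M n x x') (g : ℤ → E → F → ℝ) (hg0 : ∀ n x y, 0 ≤ g n x y)
    (y : ℤ → F) (n : ℤ) (x : E) : 0 ≤ phiB M g y n x := by
  rw [phiB]
  split
  · exact Finset.sum_nonneg fun x' _ =>
      mul_nonneg (mul_nonneg (hM0 _ _ _) (hg0 _ _ _)) (phiB_nonneg M hM0 g hg0 y (n+1) x')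
  · exact zero_le_one
termination_by (1 - n).toNat
decreasing_by omega


/-- One-step mixing for the conditional kernels: if `ε⁻ ν ≤ M_{n+1}(x,·) ≤ ε⁺ ν`
and `φ_{n+1} > 0`, then uniformly in the observation sequence `y`, the conditional
kernel `M_{n+1}^y` is minorized by `(ε⁻/ε⁺) ν̃` for some probability `ν̃`, whence
`β(M_{n+1}^y) ≤ 1 − ε⁻/ε⁺ < 1`. -/
theorem smoothing_kernel_dobrushin_bound {E F : Type*} [Fintype E] [Nonempty E]
    (M : ℤ → E → E → ℝ) (hM0 : ∀ n x x', 0 ≤ M n x x') (hM1 : ∀ n x, ∑ x', M n x x' = 1)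
    (g : ℤ → E → F → ℝ) (hg0 : ∀ n x y, 0 ≤ g n x y)
    (n : ℤ) (hn : n < 0)
    (ν : E → ℝ) (hν0 : ∀ x, 0 ≤ ν x) (hν1 : ∑ x, ν x = 1)
    (εm εp : ℝ) (hεm : 0 < εm) (hεmp : εm ≤ εp)
    (hlow : ∀ x x', εm * ν x' ≤ M (n + 1) x x')
    (hupp : ∀ x x', M (n + 1) x x' ≤ εp * ν x')
    (hφ : ∀ (y : ℤ → F) (x : E), 0 < phiB M g y (n + 1) x) :
    (∀ y : ℤ → F,
      (∃ ν' : E → ℝ, (∀ x', 0 ≤ ν' x') ∧ (∑ x', ν' x' = 1) ∧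
        ∀ x x', εm / εp * ν' x'
          ≤ M (n + 1) x x' * g (n + 1) x' (y (n + 1)) * phiB M g y (n + 2) x'
              / phiB M g y (n + 1) x) ∧
      dobrushin (fun x x' =>
          M (n + 1) x x' * g (n + 1) x' (y (n + 1)) * phiB M g y (n + 2) x'
            / phiB M g y (n + 1) x) ≤ 1 - εm / εp)
    ∧ 1 - εm / εp < 1 := by
  have hεp : 0 < εp := lt_of_lt_of_le hεm hεmp
  have hratio : 0 < εm / εp := div_pos hεm hεp
  refine ⟨fun y => ?_, by linarith⟩
  set h : E → ℝ := fun x' => g (n+1) x' (y (n+1)) * phiB M g y (n+2) x' with hhdef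
  have hh0 : ∀ x', 0 ≤ h x' :=
    fun x' => mul_nonneg (hg0 _ _ _) (phiB_nonneg M hM0 g hg0 y _ x')
  have key : ∀ x, phiB M g y (n+1) x = ∑ x', M (n+1) x x' * h x' := by
    intro x
    rw [phiB, dif_pos (by omega : n + 1 ≤ 0)]
    simp only [show (n:ℤ)+1+1 = n+2 from by ring, hhdef]
    exact Finset.sum_congr rfl fun x' _ => by ring
  set Z : ℝ := ∑ x', ν x' * h x' with hZdef
  have hZ0 : 0 ≤ Z := Finset.sum_nonneg fun x' _ => mul_nonneg (hν0 x') (hh0 x')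
  obtain ⟨x0⟩ := ‹Nonempty E›
  have hφle : ∀ x, phiB M g y (n+1) x ≤ εp * Z := by
    intro x
    rw [key x, hZdef, Finset.mul_sum]
    exact Finset.sum_le_sum fun x' _ => by
      have := mul_le_mul_of_nonneg_right (hupp x x') (hh0 x')
      nlinarith [hh0 x']
  have hZpos : 0 < Z := by
    by_contra hc
    push_neg at hc
    have : Z = 0 := le_antisymm hc hZ0
    have := hφle x0
    have := hφ y x0
    nlinarith
  have hφpos : ∀ x, 0 < phiB M g y (n+1) x := hφ y
  set ν' : E → ℝ := fun x' => ν x' * h x' / Z with hν'def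
  have hν'0 : ∀ x', 0 ≤ ν' x' := fun x' =>
    div_nonneg (mul_nonneg (hν0 x') (hh0 x')) hZ0
  have hν'1 : ∑ x', ν' x' = 1 := by
    rw [hν'def, ← Finset.sum_div, ← hZdef, div_self hZpos.ne']
  have hminor : ∀ x x', εm / εp * ν' x'
      ≤ M (n + 1) x x' * g (n + 1) x' (y (n + 1)) * phiB M g y (n + 2) x'
          / phiB M g y (n + 1) x := by
    intro x x'
    have hterm : M (n + 1) x x' * g (n + 1) x' (y (n + 1)) * phiB M g y (n + 2) x'
        = M (n+1) x x' * h x' := by rw [hhdef]; ring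
    rw [hterm]
    have h1 : εm / εp * ν' x' = εm * (ν x' * h x') / (εp * Z) := by
      rw [hν'def]; field_simp
    rw [h1]
    apply div_le_div₀ (mul_nonneg (hM0 _ _ _) (hh0 x'))
    · have := mul_le_mul_of_nonneg_right (hlow x x') (hh0 x')
      nlinarith
    · exact hφpos x
    · exact hφle x
  refine ⟨⟨ν', hν'0, hν'1, hminor⟩, ?_⟩
  set K : E → E → ℝ := fun x x' =>
      M (n + 1) x x' * g (n + 1) x' (y (n + 1)) * phiB M g y (n + 2) x'
        / phiB M g y (n + 1) x with hKdef
  have hKrow : ∀ x, ∑ x', K x x' = 1 := by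
    intro x
    have : ∑ x', K x x'
        = (∑ x', M (n + 1) x x' * g (n + 1) x' (y (n + 1)) * phiB M g y (n + 2) x')
            / phiB M g y (n + 1) x := by
      rw [Finset.sum_div]
    rw [this]
    have heq : (∑ x', M (n + 1) x x' * g (n + 1) x' (y (n + 1)) * phiB M g y (n + 2) x')
        = phiB M g y (n+1) x := by
      rw [key x]
      exact Finset.sum_congr rfl fun x' _ => (mul_assoc _ _ _)
    rw [heq, div_self (hφpos x).ne']
  have habs : ∀ a b : ℝ, |a - b| = a + b - 2 * min a b := by
    intro a b
    rcases le_total a b with hab | hab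
    · rw [abs_of_nonpos (by linarith), min_eq_left hab]; ring
    · rw [abs_of_nonneg (by linarith), min_eq_right hab]; ring
  rw [dobrushin]
  apply ciSup_le
  rintro ⟨x1, x2⟩
  have hsum : ∑ z, |K x1 z - K x2 z|
      = 2 - 2 * ∑ z, min (K x1 z) (K x2 z) := by
    simp only [habs]
    rw [Finset.sum_sub_distrib, Finset.sum_add_distrib, hKrow, hKrow, ← Finset.mul_sum]
    ring
  have hmin : εm / εp ≤ ∑ z, min (K x1 z) (K x2 z) := by
    calc εm / εp = ∑ z, εm / εp * ν' z := by
          rw [← Finset.mul_sum, hν'1, mul_one]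
      _ ≤ ∑ z, min (K x1 z) (K x2 z) :=
          Finset.sum_le_sum fun z _ => le_min (hminor x1 z) (hminor x2 z)
  simp only [hKdef] at hsum
  rw [hsum]
  linarith
end
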